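/- arXiv:math/0311498 — 4 statements merged into one kernel-verified Lean document; each statement's English description precedes it below -/
import Mathlib

section
/- For every fixed integer m ≥ 1, as x → ∞, 1/li(x) = (1/x)·(log x − 1 − k_1/log x − k_2/log² x − ... − k_m/log^m x) + O(1/(x·log^{m+1} x)), where the constants k_j are defined by the recurrence k_j + 1!·k_{j-1} + ... + (j-1)!·k_1 = j·j!. -/
open Filter Real
open MeasureTheory intervalIntegral Finset

noncomputable def li (x : ℝ) : ℝ := ∫ t in (2:ℝ)..x, 1 / Real.log t

lemma intIntLog (ℓ : ℕ) {a b : ℝ} (ha : 2 ≤ a) (hab : a ≤ b) :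
    IntervalIntegrable (fun t => 1 / (Real.log t) ^ ℓ) volume a b := by
  apply ContinuousOn.intervalIntegrable
  rw [Set.uIcc_of_le hab]
  have h0 : ∀ t ∈ Set.Icc a b, (Real.log t) ^ ℓ ≠ 0 := fun t ht =>
    pow_ne_zero _ (ne_of_gt (Real.log_pos (by linarith [ht.1])))
  exact ContinuousOn.div continuousOn_const
    ((Real.continuousOn_log.mono fun t ht => by
      simp only [Set.mem_compl_iff, Set.mem_singleton_iff]
      intro h; rw [h] at ht; linarith [ht.1]).pow ℓ) h0

lemma ftc_step (n : ℕ) {x : ℝ} (hx : 2 ≤ x) :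
    ∫ t in (2:ℝ)..x, 1 / (Real.log t) ^ (n+1)
      = x / (Real.log x) ^ (n+1) - 2 / (Real.log 2) ^ (n+1)
        + (n+1) * ∫ t in (2:ℝ)..x, 1 / (Real.log t) ^ (n+2) := by
  have key : ∫ t in (2:ℝ)..x,
      (1 / (Real.log t) ^ (n+1) - (n+1) * (1 / (Real.log t) ^ (n+2)))
      = x / (Real.log x) ^ (n+1) - 2 / (Real.log 2) ^ (n+1) := by
    apply intervalIntegral.integral_eq_sub_of_hasDerivAt
    · intro t ht
      rw [Set.uIcc_of_le hx] at ht
      have ht2 : (2:ℝ) ≤ t := ht.1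
      have ht0 : t ≠ 0 := by linarith
      have hlt : 0 < Real.log t := Real.log_pos (by linarith)
      have hd : HasDerivAt (fun t => t / (Real.log t) ^ (n+1))
          ((1 * (Real.log t) ^ (n+1) -
            t * ((n+1) * (Real.log t) ^ n * t⁻¹)) / ((Real.log t) ^ (n+1)) ^ 2) t := by
        have hlog : HasDerivAt Real.log t⁻¹ t := Real.hasDerivAt_log ht0
        have hpow : HasDerivAt (fun t => (Real.log t) ^ (n+1))
            ((n+1) * (Real.log t) ^ n * t⁻¹) t := by
          simpa using hlog.fun_pow (n+1)
        exact (hasDerivAt_id t).div hpow (pow_ne_zero _ hlt.ne')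
      refine hd.congr_deriv ?_
      field_simp
      ring
    · exact ((intIntLog (n+1) le_rfl hx).sub (((intIntLog (n+2) le_rfl hx)).const_mul _))
  have hsub : ∫ t in (2:ℝ)..x,
      (1 / (Real.log t) ^ (n+1) - (n+1) * (1 / (Real.log t) ^ (n+2)))
      = (∫ t in (2:ℝ)..x, 1 / (Real.log t) ^ (n+1))
        - (n+1) * ∫ t in (2:ℝ)..x, 1 / (Real.log t) ^ (n+2) := by
    rw [intervalIntegral.integral_sub (intIntLog (n+1) le_rfl hx)
      ((intIntLog (n+2) le_rfl hx).const_mul _), intervalIntegral.integral_const_mul]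
  rw [hsub] at key
  linarith

lemma li_expansion (n : ℕ) {x : ℝ} (hx : 2 ≤ x) :
    li x = (∑ i ∈ Finset.range (n+1), (Nat.factorial i : ℝ) *
        (x / (Real.log x) ^ (i+1) - 2 / (Real.log 2) ^ (i+1)))
      + (Nat.factorial (n+1) : ℝ) * ∫ t in (2:ℝ)..x, 1 / (Real.log t) ^ (n+2) := by
  induction n with
  | zero =>
    have h0 : li x = ∫ t in (2:ℝ)..x, 1 / (Real.log t) ^ (0+1) := by
      unfold li; simp
    rw [h0, ftc_step 0 hx]
    norm_num
  | succ n ih =>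
    rw [ih, ftc_step (n+1) hx, Finset.sum_range_succ
      (f := fun i => (Nat.factorial i : ℝ) * (x / (Real.log x) ^ (i+1) - 2 / (Real.log 2) ^ (i+1)))
      (n := n+1)]
    push_cast [Nat.factorial_succ]
    ring

lemma integral_isBigO (ℓ : ℕ) :
    (fun x : ℝ => ∫ t in (2:ℝ)..x, 1 / (Real.log t) ^ ℓ)
      =O[atTop] (fun x => x / (Real.log x) ^ ℓ) := by
  rw [Asymptotics.isBigO_iff]
  refine ⟨1 / (Real.log 2) ^ ℓ + 2 ^ ℓ, ?_⟩
  have hlogsq : ∀ᶠ x : ℝ in atTop, (Real.log x) ^ ℓ ≤ Real.sqrt x := by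
    have h := (Real.isLittleO_pow_log_id_atTop (n := 2*ℓ)).bound one_pos
    filter_upwards [h, eventually_ge_atTop (1:ℝ)] with x hx hx1
    have hlx : 0 ≤ Real.log x := Real.log_nonneg hx1
    rw [Real.le_sqrt (by positivity) (by linarith)]
    calc ((Real.log x) ^ ℓ) ^ 2 = (Real.log x) ^ (2*ℓ) := by rw [← pow_mul]; ring_nf
    _ ≤ x := by
      have := hx
      simp only [norm_pow, Real.norm_eq_abs, id] at this
      rw [abs_of_nonneg hlx, abs_of_nonneg (by linarith : (0:ℝ) ≤ x)] at this
      simpa using this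
  filter_upwards [hlogsq, eventually_ge_atTop (4:ℝ)] with x hsq hx4
  set s := Real.sqrt x with hs
  have hx0 : (0:ℝ) < x := by linarith
  have hs2 : (2:ℝ) ≤ s := by
    rw [hs, show (2:ℝ) = Real.sqrt 4 by rw [show (4:ℝ) = 2^2 by norm_num, Real.sqrt_sq]; norm_num]
    exact Real.sqrt_le_sqrt hx4
  have hsx : s ≤ x := by
    rw [hs]
    nlinarith [Real.sq_sqrt hx0.le, Real.sqrt_nonneg x]
  have hx2 : (2:ℝ) ≤ x := by linarith
  have hL1 : (1:ℝ) ≤ Real.log x := by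
    rw [show (1:ℝ) = Real.log (Real.exp 1) by simp]
    exact Real.log_le_log (Real.exp_pos 1) (by linarith [Real.exp_one_lt_d9])
  have hL0 : (0:ℝ) < Real.log x := by linarith
  have hsplit : (∫ t in (2:ℝ)..x, 1 / (Real.log t) ^ ℓ)
      = (∫ t in (2:ℝ)..s, 1 / (Real.log t) ^ ℓ) + ∫ t in s..x, 1 / (Real.log t) ^ ℓ :=
    (intervalIntegral.integral_add_adjacent_intervals (intIntLog ℓ le_rfl hs2)
      (intIntLog ℓ hs2 hsx)).symm
  have hlog2 : (0:ℝ) < Real.log 2 := Real.log_pos (by norm_num)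
  -- bound on [2, s]
  have hb1 : (∫ t in (2:ℝ)..s, 1 / (Real.log t) ^ ℓ) ≤ (s - 2) * (1 / (Real.log 2) ^ ℓ) := by
    calc (∫ t in (2:ℝ)..s, 1 / (Real.log t) ^ ℓ)
        ≤ ∫ _t in (2:ℝ)..s, 1 / (Real.log 2) ^ ℓ := by
          apply intervalIntegral.integral_mono_on hs2 (intIntLog ℓ le_rfl hs2)
            intervalIntegrable_const
          intro t ht
          have h1 : Real.log 2 ≤ Real.log t := Real.log_le_log (by norm_num) ht.1
          exact one_div_le_one_div_of_le (by positivity) (pow_le_pow_left₀ hlog2.le h1 ℓ)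
    _ = (s - 2) * (1 / (Real.log 2) ^ ℓ) := by simp
  have hb2 : (∫ t in s..x, 1 / (Real.log t) ^ ℓ) ≤ (x - s) * (1 / (Real.log s) ^ ℓ) := by
    calc (∫ t in s..x, 1 / (Real.log t) ^ ℓ)
        ≤ ∫ _t in s..x, 1 / (Real.log s) ^ ℓ := by
          apply intervalIntegral.integral_mono_on hsx (intIntLog ℓ hs2 hsx)
            intervalIntegrable_const
          intro t ht
          have hls : (0:ℝ) < Real.log s := Real.log_pos (by linarith)
          have h1 : Real.log s ≤ Real.log t := Real.log_le_log (by linarith) ht.1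
          exact one_div_le_one_div_of_le (by positivity) (pow_le_pow_left₀ hls.le h1 ℓ)
    _ = (x - s) * (1 / (Real.log s) ^ ℓ) := by simp
  have hpos1 : (0:ℝ) ≤ ∫ t in (2:ℝ)..s, 1 / (Real.log t) ^ ℓ := by
    apply intervalIntegral.integral_nonneg hs2
    intro t ht
    have : (0:ℝ) < Real.log t := Real.log_pos (by linarith [ht.1])
    positivity
  have hpos2 : (0:ℝ) ≤ ∫ t in s..x, 1 / (Real.log t) ^ ℓ := by
    apply intervalIntegral.integral_nonneg hsx
    intro t ht
    have : (0:ℝ) < Real.log t := Real.log_pos (by linarith [ht.1])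
    positivity
  have hlogs : Real.log s = Real.log x / 2 := by
    rw [hs, Real.log_sqrt hx0.le]
  have key1 : s * (Real.log x) ^ ℓ ≤ x := by
    calc s * (Real.log x) ^ ℓ ≤ s * s := by
          apply mul_le_mul_of_nonneg_left hsq (by linarith)
    _ = x := Real.mul_self_sqrt hx0.le
  have key2 : (x - s) * (1 / (Real.log s) ^ ℓ) ≤ 2 ^ ℓ * (x / (Real.log x) ^ ℓ) := by
    rw [hlogs]
    have hls : (0:ℝ) < Real.log x / 2 := by linarith
    rw [div_pow, one_div, inv_div]
    calc (x - s) * (2 ^ ℓ / (Real.log x) ^ ℓ) ≤ x * (2 ^ ℓ / (Real.log x) ^ ℓ) := by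
          apply mul_le_mul_of_nonneg_right (by linarith) (by positivity)
    _ = 2 ^ ℓ * (x / (Real.log x) ^ ℓ) := by ring
  rw [Real.norm_eq_abs, Real.norm_eq_abs, hsplit,
    abs_of_nonneg (by linarith), abs_of_nonneg (by positivity : (0:ℝ) ≤ x / (Real.log x) ^ ℓ)]
  have hb1' : (s - 2) * (1 / (Real.log 2) ^ ℓ) ≤ (1 / (Real.log 2) ^ ℓ) * (x / (Real.log x) ^ ℓ) := by
    have h1 : s - 2 ≤ x / (Real.log x) ^ ℓ := by
      rw [le_div_iff₀ (by positivity)]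
      nlinarith
    calc (s - 2) * (1 / (Real.log 2) ^ ℓ) ≤ (x / (Real.log x) ^ ℓ) * (1 / (Real.log 2) ^ ℓ) :=
        mul_le_mul_of_nonneg_right h1 (by positivity)
    _ = (1 / (Real.log 2) ^ ℓ) * (x / (Real.log x) ^ ℓ) := by ring
  calc (∫ t in (2:ℝ)..s, 1 / (Real.log t) ^ ℓ) + ∫ t in s..x, 1 / (Real.log t) ^ ℓ
      ≤ (s - 2) * (1 / (Real.log 2) ^ ℓ) + (x - s) * (1 / (Real.log s) ^ ℓ) := by
        exact add_le_add hb1 hb2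
  _ ≤ (1 / (Real.log 2) ^ ℓ) * (x / (Real.log x) ^ ℓ) + 2 ^ ℓ * (x / (Real.log x) ^ ℓ) :=
        add_le_add hb1' key2
  _ = (1 / (Real.log 2) ^ ℓ + 2 ^ ℓ) * (x / (Real.log x) ^ ℓ) := by ring

lemma poly_id (K : ℕ → ℝ)
    (hK1 : ∀ s : ℕ, ∑ i ∈ Finset.range (s+1), (Nat.factorial i : ℝ) * K (s - i)
      = Nat.factorial (s+1))
    (m : ℕ) {L : ℝ} (hL : L ≠ 0) :
    (∑ i ∈ Finset.range (m+2), (Nat.factorial i : ℝ) * (L⁻¹) ^ (i+1))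
        * (L - ∑ j ∈ Finset.range (m+1), K j * (L⁻¹) ^ j)
      = 1 - ∑ p ∈ (Finset.range (m+2) ×ˢ Finset.range (m+1)).filter
            (fun p => ¬ (p.1 + p.2 ≤ m)),
          (Nat.factorial p.1 : ℝ) * K p.2 * (L⁻¹) ^ (p.1 + p.2 + 1) := by
  set u := L⁻¹ with hu
  have huL : u * L = 1 := inv_mul_cancel₀ hL
  have hSL : (∑ i ∈ Finset.range (m+2), (Nat.factorial i : ℝ) * u ^ (i+1)) * L
      = ∑ i ∈ Finset.range (m+2), (Nat.factorial i : ℝ) * u ^ i := by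
    rw [Finset.sum_mul]
    apply Finset.sum_congr rfl
    intro i _
    calc (Nat.factorial i : ℝ) * u ^ (i+1) * L
        = (Nat.factorial i : ℝ) * u ^ i * (u * L) := by ring
    _ = (Nat.factorial i : ℝ) * u ^ i := by rw [huL, mul_one]
  have hprod : (∑ i ∈ Finset.range (m+2), (Nat.factorial i : ℝ) * u ^ (i+1))
      * (∑ j ∈ Finset.range (m+1), K j * u ^ j)
      = ∑ p ∈ Finset.range (m+2) ×ˢ Finset.range (m+1),
          (Nat.factorial p.1 : ℝ) * K p.2 * u ^ (p.1 + p.2 + 1) := by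
    rw [Finset.sum_mul_sum, Finset.sum_product]
    apply Finset.sum_congr rfl; intro i _
    apply Finset.sum_congr rfl; intro j _
    rw [pow_add, pow_add]
    ring
  have hsplitF : ∑ p ∈ Finset.range (m+2) ×ˢ Finset.range (m+1),
          (Nat.factorial p.1 : ℝ) * K p.2 * u ^ (p.1 + p.2 + 1)
      = (∑ p ∈ (Finset.range (m+2) ×ˢ Finset.range (m+1)).filter (fun p => p.1 + p.2 ≤ m),
          (Nat.factorial p.1 : ℝ) * K p.2 * u ^ (p.1 + p.2 + 1))
        + ∑ p ∈ (Finset.range (m+2) ×ˢ Finset.range (m+1)).filter (fun p => ¬ (p.1 + p.2 ≤ m)),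
          (Nat.factorial p.1 : ℝ) * K p.2 * u ^ (p.1 + p.2 + 1) :=
    (Finset.sum_filter_add_sum_filter_not _ _ _).symm
  have hF1 : (Finset.range (m+2) ×ˢ Finset.range (m+1)).filter (fun p => p.1 + p.2 ≤ m)
      = (Finset.range (m+1)).biUnion (fun s => Finset.HasAntidiagonal.antidiagonal s) := by
    ext p
    simp only [Finset.mem_filter, Finset.mem_product, Finset.mem_range, Finset.mem_biUnion,
      Finset.HasAntidiagonal.mem_antidiagonal]
    constructor
    · rintro ⟨⟨_, _⟩, h⟩; exact ⟨p.1 + p.2, by omega, rfl⟩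
    · rintro ⟨s, hs, hmem⟩; omega
  have hdisj : ∀ s ∈ Finset.range (m+1), ∀ t ∈ Finset.range (m+1), s ≠ t →
      Disjoint (Finset.HasAntidiagonal.antidiagonal s) (Finset.HasAntidiagonal.antidiagonal t) := by
    intro s _ t _ hst
    rw [Finset.disjoint_left]
    intro p hp hp'
    rw [Finset.HasAntidiagonal.mem_antidiagonal] at hp hp'
    exact hst (hp ▸ hp')
  have hF1sum : ∑ p ∈ (Finset.range (m+2) ×ˢ Finset.range (m+1)).filter
        (fun p => p.1 + p.2 ≤ m),
        (Nat.factorial p.1 : ℝ) * K p.2 * u ^ (p.1 + p.2 + 1)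
      = ∑ s ∈ Finset.range (m+1), (Nat.factorial (s+1) : ℝ) * u ^ (s+1) := by
    rw [hF1, Finset.sum_biUnion hdisj]
    apply Finset.sum_congr rfl
    intro s _
    rw [Finset.Nat.sum_antidiagonal_eq_sum_range_succ_mk]
    have : ∀ i ∈ Finset.range (s+1),
        (Nat.factorial i : ℝ) * K (s - i) * u ^ (i + (s - i) + 1)
          = ((Nat.factorial i : ℝ) * K (s - i)) * u ^ (s+1) := by
      intro i hi
      rw [Finset.mem_range] at hi
      have : i + (s - i) = s := by omega
      rw [this]
    rw [Finset.sum_congr rfl this, ← Finset.sum_mul, hK1 s]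
  have hfinal : (∑ i ∈ Finset.range (m+2), (Nat.factorial i : ℝ) * u ^ i)
      - ∑ s ∈ Finset.range (m+1), (Nat.factorial (s+1) : ℝ) * u ^ (s+1) = 1 := by
    rw [Finset.sum_range_succ' (fun i => (Nat.factorial i : ℝ) * u ^ i) (m+1)]
    simp [Nat.factorial]
  rw [mul_sub, hSL, hprod, hsplitF]
  linarith [hfinal]

set_option maxHeartbeats 1000000 in
theorem one_div_li_asymptotic (k : ℕ → ℝ)
    (hk : ∀ j : ℕ, 1 ≤ j →
      ∑ i ∈ Finset.range j, (Nat.factorial i : ℝ) * k (j - i) =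
        j * Nat.factorial j)
    (m : ℕ) (hm : 1 ≤ m) :
    (fun x : ℝ => 1 / li x -
        (1 / x) * (Real.log x - 1 -
          ∑ j ∈ Finset.Icc 1 m, k j / (Real.log x) ^ j))
      =O[atTop] (fun x : ℝ => 1 / (x * (Real.log x) ^ (m + 1))) := by
  classical
  set K : ℕ → ℝ := fun j => if j = 0 then 1 else k j with hKdef
  have hK1 : ∀ s : ℕ, ∑ i ∈ Finset.range (s+1), (Nat.factorial i : ℝ) * K (s - i)
      = Nat.factorial (s+1) := by
    intro s
    rcases Nat.eq_zero_or_pos s with hs | hs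
    · subst hs; simp [hKdef]
    · rw [Finset.sum_range_succ]
      have h1 : ∑ i ∈ Finset.range s, (Nat.factorial i : ℝ) * K (s - i)
          = ∑ i ∈ Finset.range s, (Nat.factorial i : ℝ) * k (s - i) := by
        apply Finset.sum_congr rfl; intro i hi
        rw [Finset.mem_range] at hi
        have h2 : s - i ≠ 0 := by omega
        simp [hKdef, h2]
      have h3 : K (s - s) = 1 := by simp [hKdef]
      rw [h1, hk s hs, h3, Nat.factorial_succ]
      push_cast
      ring
  set F2 : Finset (ℕ × ℕ) := (Finset.range (m+2) ×ˢ Finset.range (m+1)).filter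
      (fun p => ¬ (p.1 + p.2 ≤ m)) with hF2def
  -- constants
  obtain ⟨A₀, hA₀⟩ := Asymptotics.isBigO_iff.mp (integral_isBigO (m+3))
  set A := |A₀| with hAdef
  have hA : ∀ᶠ x : ℝ in atTop,
      ‖∫ t in (2:ℝ)..x, 1 / (Real.log t) ^ (m+3)‖ ≤ A * ‖x / (Real.log x) ^ (m+3)‖ := by
    filter_upwards [hA₀] with x hx
    exact hx.trans (mul_le_mul_of_nonneg_right (le_abs_self _) (norm_nonneg _))
  have hA0 : 0 ≤ A := abs_nonneg _
  set Kb := ∑ j ∈ Finset.Icc 1 m, |k j| with hKbdef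
  have hKb0 : 0 ≤ Kb := Finset.sum_nonneg fun j _ => abs_nonneg _
  set B := ∑ p ∈ Finset.range (m+2) ×ˢ Finset.range (m+1),
      (Nat.factorial p.1 : ℝ) * |K p.2| with hBdef
  have hB0 : 0 ≤ B := Finset.sum_nonneg fun p _ => by positivity
  set C := ∑ i ∈ Finset.range (m+2), (Nat.factorial i : ℝ) * (2 / (Real.log 2) ^ (i+1))
    with hCdef
  have hlog2 : (0:ℝ) < Real.log 2 := Real.log_pos (by norm_num)
  have hC0 : 0 ≤ C := Finset.sum_nonneg fun i _ => by positivity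
  set D := B + 1 + (Nat.factorial (m+2) : ℝ) * A * (2 + Kb) with hDdef
  have hD0 : 0 ≤ D := by positivity
  rw [Asymptotics.isBigO_iff]
  refine ⟨2 * D, ?_⟩
  -- eventual bounds
  have ev3 : ∀ᶠ x : ℝ in atTop,
      ((Nat.factorial (m+2) : ℝ) * A) * ((Real.log x)⁻¹) ^ 2 ≤ 1/4 := by
    have ht : Tendsto (fun x : ℝ => ((Nat.factorial (m+2) : ℝ) * A) * ((Real.log x)⁻¹) ^ 2)
        atTop (nhds 0) := by
      have h1 : Tendsto (fun x : ℝ => (Real.log x)⁻¹) atTop (nhds 0) :=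
        Real.tendsto_log_atTop.inv_tendsto_atTop
      have h2 := (h1.pow 2).const_mul ((Nat.factorial (m+2) : ℝ) * A)
      simpa using h2
    exact (ht.eventually_lt_const (by norm_num)).mono fun x hx => le_of_lt hx
  have ev4 : ∀ᶠ x : ℝ in atTop, ‖Real.log x‖ ≤ (4*(C+1))⁻¹ * ‖x‖ :=
    isLittleO_log_id_atTop.bound (by positivity)
  have ev5 : ∀ᶠ x : ℝ in atTop,
      ‖(Real.log x) ^ (m+3)‖ ≤ (C*(2+Kb)+1)⁻¹ * ‖x‖ :=
    (Real.isLittleO_pow_log_id_atTop (n := m+3)).bound (by positivity)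
  filter_upwards [eventually_ge_atTop (2:ℝ), eventually_ge_atTop (Real.exp 1),
    hA, ev3, ev4, ev5] with x h2x hex hAx h3x h4x h5x
  -- setup
  set L := Real.log x with hLdef
  have hx0 : (0:ℝ) < x := by linarith
  have hL1 : (1:ℝ) ≤ L := by
    rw [hLdef, show (1:ℝ) = Real.log (Real.exp 1) by simp]
    exact Real.log_le_log (Real.exp_pos 1) hex
  have hL0 : (0:ℝ) < L := by linarith
  set u := L⁻¹ with hudef
  have hu0 : (0:ℝ) < u := by positivity
  have hu1 : u ≤ 1 := by rw [hudef]; exact inv_le_one_of_one_le₀ hL1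
  have huL : u * L = 1 := inv_mul_cancel₀ hL0.ne'
  have hupow : ∀ a b : ℕ, a ≤ b → u ^ b ≤ u ^ a := fun a b hab =>
    pow_le_pow_of_le_one hu0.le hu1 hab
  -- expansion
  set R0 := ∫ t in (2:ℝ)..x, 1 / (Real.log t) ^ (m+3) with hR0def
  set S := ∑ i ∈ Finset.range (m+2), (Nat.factorial i : ℝ) * u ^ (i+1) with hSdef
  have hxu : ∀ n : ℕ, x / L ^ n = x * u ^ n := by
    intro n; rw [div_eq_mul_inv, hudef, inv_pow]
  have hli : li x = x * S - C + (Nat.factorial (m+2) : ℝ) * R0 := by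
    have hexp := li_expansion (m+1) h2x
    rw [show m+1+1 = m+2 by rfl, show m+1+2 = m+3 by rfl] at hexp
    have hcongr : ∀ i ∈ Finset.range (m+2),
        (Nat.factorial i : ℝ) * (x / L ^ (i+1) - 2 / (Real.log 2) ^ (i+1))
          = x * ((Nat.factorial i : ℝ) * u ^ (i+1))
            - (Nat.factorial i : ℝ) * (2 / (Real.log 2) ^ (i+1)) := by
      intro i _; rw [hxu (i+1)]; ring
    rw [hexp, Finset.sum_congr rfl hcongr, Finset.sum_sub_distrib, ← Finset.mul_sum,
      ← hSdef, ← hCdef, ← hR0def]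
  -- bound on remainder
  have hR : |(Nat.factorial (m+2) : ℝ) * R0|
      ≤ (Nat.factorial (m+2) : ℝ) * A * (x * u ^ (m+3)) := by
    have h1 : ‖R0‖ ≤ A * ‖x / L ^ (m+3)‖ := hAx
    rw [Real.norm_eq_abs, Real.norm_eq_abs, hxu (m+3),
      abs_of_nonneg (by positivity : (0:ℝ) ≤ x * u ^ (m+3))] at h1
    rw [abs_mul, abs_of_nonneg (by positivity : (0:ℝ) ≤ (Nat.factorial (m+2) : ℝ))]
    calc (Nat.factorial (m+2) : ℝ) * |R0|
        ≤ (Nat.factorial (m+2) : ℝ) * (A * (x * u ^ (m+3))) :=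
        mul_le_mul_of_nonneg_left h1 (by positivity)
    _ = (Nat.factorial (m+2) : ℝ) * A * (x * u ^ (m+3)) := by ring
  -- bound on the linear factor
  set Sg := ∑ j ∈ Finset.Icc 1 m, k j / L ^ j with hSgdef
  have hSig : |Sg| ≤ Kb := by
    rw [hSgdef, hKbdef]
    calc |∑ j ∈ Finset.Icc 1 m, k j / L ^ j| ≤ ∑ j ∈ Finset.Icc 1 m, |k j / L ^ j| :=
        Finset.abs_sum_le_sum_abs _ _
    _ ≤ ∑ j ∈ Finset.Icc 1 m, |k j| := by
        apply Finset.sum_le_sum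
        intro j _
        rw [abs_div, abs_of_nonneg (by positivity : (0:ℝ) ≤ L ^ j)]
        exact div_le_self (abs_nonneg _) (one_le_pow₀ hL1)
  have hlin : |L - 1 - Sg| ≤ (2 + Kb) * L := by
    calc |L - 1 - Sg| ≤ |L - 1| + |Sg| := abs_sub _ _
    _ ≤ (L + 1) + Kb := by
        apply add_le_add _ hSig
        rw [abs_of_nonneg (by linarith)]; linarith
    _ ≤ (2 + Kb) * L := by nlinarith
  -- polynomial identity
  have hins : ∑ j ∈ Finset.range (m+1), K j * u ^ j = 1 + Sg := by
    have h1 : Finset.range (m+1) = insert 0 (Finset.Icc 1 m) := by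
      ext a; simp only [Finset.mem_range, Finset.mem_insert, Finset.mem_Icc]; omega
    rw [h1, Finset.sum_insert (by simp)]
    have h2 : K 0 * u ^ 0 = 1 := by simp [hKdef]
    rw [h2, hSgdef]
    congr 1
    apply Finset.sum_congr rfl
    intro j hj
    rw [Finset.mem_Icc] at hj
    have hj0 : j ≠ 0 := by omega
    rw [hKdef]
    simp only [hj0, if_false]
    rw [div_eq_mul_inv, hudef, inv_pow]
  set E := ∑ p ∈ F2, (Nat.factorial p.1 : ℝ) * K p.2 * u ^ (p.1 + p.2 + 1) with hEdef
  have hpoly : S * (L - 1 - Sg) = 1 - E := by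
    have hp := poly_id K hK1 m hL0.ne'
    rw [← hudef, ← hSdef, ← hF2def, ← hEdef, hins] at hp
    calc S * (L - 1 - Sg) = S * (L - (1 + Sg)) := by ring
    _ = 1 - E := hp
  have hE : |E| ≤ B * u ^ (m+2) := by
    calc |E| ≤ ∑ p ∈ F2, |(Nat.factorial p.1 : ℝ) * K p.2 * u ^ (p.1 + p.2 + 1)| :=
        Finset.abs_sum_le_sum_abs _ _
    _ ≤ ∑ p ∈ F2, ((Nat.factorial p.1 : ℝ) * |K p.2|) * u ^ (m+2) := by
        apply Finset.sum_le_sum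
        intro p hp
        rw [hF2def, Finset.mem_filter] at hp
        have hp2 : m + 2 ≤ p.1 + p.2 + 1 := by omega
        rw [abs_mul, abs_mul, abs_of_nonneg (by positivity : (0:ℝ) ≤ (Nat.factorial p.1 : ℝ)),
          abs_of_nonneg (by positivity : (0:ℝ) ≤ u ^ (p.1 + p.2 + 1))]
        exact mul_le_mul_of_nonneg_left (hupow _ _ hp2) (by positivity)
    _ ≤ ∑ p ∈ Finset.range (m+2) ×ˢ Finset.range (m+1),
        ((Nat.factorial p.1 : ℝ) * |K p.2|) * u ^ (m+2) := by
        apply Finset.sum_le_sum_of_subset_of_nonneg (hF2def ▸ Finset.filter_subset _ _)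
        intro p _ _; positivity
    _ = B * u ^ (m+2) := by rw [hBdef, Finset.sum_mul]
  -- lower bound on li
  have hSu : u ≤ S := by
    have h0 : (0:ℕ) ∈ Finset.range (m+2) := by simp
    have h1 := Finset.single_le_sum
      (f := fun i => (Nat.factorial i : ℝ) * u ^ (i+1))
      (fun i _ => by positivity) h0
    rw [← hSdef] at h1
    simpa using h1
  clear_value K F2 A Kb B C D E S Sg R0 u L
  have hC4 : C ≤ x * u / 4 := by
    rw [Real.norm_eq_abs, Real.norm_eq_abs, abs_of_nonneg hL0.le,
      abs_of_nonneg hx0.le] at h4x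
    have h1 : 4 * (C+1) * L ≤ x := by
      rw [le_inv_mul_iff₀ (by linarith : (0:ℝ) < 4*(C+1))] at h4x
      linarith
    have h2 : 4 * (C+1) * L * u ≤ x * u := mul_le_mul_of_nonneg_right h1 hu0.le
    have h3 : 4 * (C+1) * L * u = 4 * (C+1) := by
      rw [mul_assoc, mul_comm L u, huL, mul_one]
    linarith
  have hRu : (Nat.factorial (m+2) : ℝ) * A * (x * u ^ (m+3)) ≤ x * u / 4 := by
    have h1 : u ^ (m+3) ≤ u ^ 2 * u := by
      calc u ^ (m+3) ≤ u ^ 3 := hupow 3 (m+3) (by omega)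
      _ = u ^ 2 * u := by ring
    have hfa : (0:ℝ) ≤ (Nat.factorial (m+2) : ℝ) * A :=
      mul_nonneg (Nat.cast_nonneg _) hA0
    calc (Nat.factorial (m+2) : ℝ) * A * (x * u ^ (m+3))
        ≤ (Nat.factorial (m+2) : ℝ) * A * (x * (u ^ 2 * u)) :=
        mul_le_mul_of_nonneg_left (mul_le_mul_of_nonneg_left h1 hx0.le) hfa
    _ = ((Nat.factorial (m+2) : ℝ) * A * u ^ 2) * (x * u) := by ring
    _ ≤ (1/4) * (x * u) :=
        mul_le_mul_of_nonneg_right h3x (mul_nonneg hx0.le hu0.le)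
    _ = x * u / 4 := by ring
  have hliLB : x * u / 2 ≤ li x := by
    rw [hli]
    have h1 : x * u ≤ x * S := mul_le_mul_of_nonneg_left hSu hx0.le
    have h2 : -((Nat.factorial (m+2) : ℝ) * R0) ≤ |(Nat.factorial (m+2) : ℝ) * R0| :=
      neg_le_abs _
    linarith [hR, hRu, hC4]
  have hli0 : (0:ℝ) < li x := lt_of_lt_of_le (div_pos (mul_pos hx0 hu0) two_pos) hliLB
  set Q := 1 / x * (L - 1 - Sg) with hQdef
  have hxQ : x * Q = L - 1 - Sg := by
    rw [hQdef]; field_simp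
  have hliQ : 1 - li x * Q = E + C * Q - ((Nat.factorial (m+2) : ℝ) * R0) * Q := by
    rw [hli]
    have h1 : (x * S - C + (Nat.factorial (m+2) : ℝ) * R0) * Q
        = S * (x * Q) - C * Q + ((Nat.factorial (m+2) : ℝ) * R0) * Q := by ring
    rw [h1, hxQ, hpoly]
    ring
  have hQb : |Q| ≤ (2 + Kb) * L / x := by
    have h1x : (0:ℝ) ≤ 1 / x := one_div_nonneg.mpr hx0.le
    rw [hQdef, abs_mul, abs_of_nonneg h1x]
    calc 1/x * |L - 1 - Sg| ≤ 1/x * ((2 + Kb) * L) :=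
        mul_le_mul_of_nonneg_left hlin h1x
    _ = (2 + Kb) * L / x := by ring
  have hpows : u ^ (m+2) * L ^ (m+2) = 1 := by
    rw [hudef, ← mul_pow, inv_mul_cancel₀ hL0.ne', one_pow]
  have hLu : L ^ (m+3) * u ^ (m+2) = L := by
    have h1 : L ^ (m+3) * u ^ (m+2) = (u ^ (m+2) * L ^ (m+2)) * L := by ring
    rw [h1, hpows, one_mul]
  have hCQ : |C * Q| ≤ u ^ (m+2) := by
    rw [Real.norm_eq_abs, Real.norm_eq_abs, abs_of_nonneg (pow_nonneg hL0.le (m+3)),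
      abs_of_nonneg hx0.le] at h5x
    have h5x' : (C * (2 + Kb) + 1) * L ^ (m+3) ≤ x := by
      have hCKb : (0:ℝ) ≤ C * (2 + Kb) := mul_nonneg hC0 (by linarith)
      rw [le_inv_mul_iff₀ (by linarith : (0:ℝ) < C * (2 + Kb) + 1)] at h5x
      linarith
    have hkey : C * ((2 + Kb) * L) ≤ x * u ^ (m+2) := by
      have hCKb : (0:ℝ) ≤ C * (2 + Kb) := mul_nonneg hC0 (by linarith)
      have h2 : (C * (2 + Kb) + 1) * L ^ (m+3) * u ^ (m+2) ≤ x * u ^ (m+2) :=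
        mul_le_mul_of_nonneg_right h5x' (pow_nonneg hu0.le _)
      calc C * ((2 + Kb) * L) = C * (2 + Kb) * (L ^ (m+3) * u ^ (m+2)) := by rw [hLu]; ring
      _ ≤ (C * (2 + Kb) + 1) * (L ^ (m+3) * u ^ (m+2)) := by
          have hLup : (0:ℝ) ≤ L ^ (m+3) * u ^ (m+2) := by
            rw [hLu]; exact hL0.le
          exact mul_le_mul_of_nonneg_right (by linarith) hLup
      _ = (C * (2 + Kb) + 1) * L ^ (m+3) * u ^ (m+2) := by ring
      _ ≤ x * u ^ (m+2) := h2
    rw [abs_mul, abs_of_nonneg hC0]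
    calc C * |Q| ≤ C * ((2 + Kb) * L / x) := mul_le_mul_of_nonneg_left hQb hC0
    _ = C * ((2 + Kb) * L) / x := by ring
    _ ≤ u ^ (m+2) := by
        rw [div_le_iff₀ hx0]
        linarith [hkey]
  have hu3L : u ^ (m+3) * L = u ^ (m+2) := by
    have h1 : u ^ (m+3) = u ^ (m+2) * u := by rw [← pow_succ]
    rw [h1, mul_assoc, huL, mul_one]
  have hRQ : |((Nat.factorial (m+2) : ℝ) * R0) * Q|
      ≤ (Nat.factorial (m+2) : ℝ) * A * (2 + Kb) * u ^ (m+2) := by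
    rw [abs_mul]
    have hQb0 : (0:ℝ) ≤ (2 + Kb) * L / x :=
      div_nonneg (mul_nonneg (by linarith) hL0.le) hx0.le
    calc |(Nat.factorial (m+2) : ℝ) * R0| * |Q|
        ≤ ((Nat.factorial (m+2) : ℝ) * A * (x * u ^ (m+3))) * ((2 + Kb) * L / x) :=
        mul_le_mul hR hQb (abs_nonneg _)
          (mul_nonneg (mul_nonneg (Nat.cast_nonneg _) hA0)
            (mul_nonneg hx0.le (pow_nonneg hu0.le _)))
    _ = (Nat.factorial (m+2) : ℝ) * A * (2 + Kb) * (u ^ (m+3) * L) := by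
        field_simp
    _ = (Nat.factorial (m+2) : ℝ) * A * (2 + Kb) * u ^ (m+2) := by rw [hu3L]
  have h1mliQ : |1 - li x * Q| ≤ D * u ^ (m+2) := by
    rw [hliQ]
    calc |E + C * Q - ((Nat.factorial (m+2) : ℝ) * R0) * Q|
        ≤ |E + C * Q| + |((Nat.factorial (m+2) : ℝ) * R0) * Q| := abs_sub _ _
    _ ≤ (|E| + |C * Q|) + |((Nat.factorial (m+2) : ℝ) * R0) * Q| :=
        add_le_add_left (abs_add_le _ _) _
    _ ≤ (B * u ^ (m+2) + u ^ (m+2)) + (Nat.factorial (m+2) : ℝ) * A * (2 + Kb) * u ^ (m+2) :=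
        add_le_add (add_le_add hE hCQ) hRQ
    _ = D * u ^ (m+2) := by rw [hDdef]; ring
  -- final computation
  have hId : 1 / li x - Q = (1 - li x * Q) / li x := by
    field_simp
  have hRHS : |1 / (x * L ^ (m+1))| = u ^ (m+1) / x := by
    rw [abs_of_pos (one_div_pos.mpr (mul_pos hx0 (pow_pos hL0 _)))]
    rw [hudef, inv_pow, one_div, mul_inv]
    ring
  rw [hId, Real.norm_eq_abs, Real.norm_eq_abs, abs_div, abs_of_pos hli0, hRHS]
  have hDu0 : (0:ℝ) ≤ D * u ^ (m+2) := mul_nonneg hD0 (pow_nonneg hu0.le _)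
  calc |1 - li x * Q| / li x ≤ (D * u ^ (m+2)) / (x * u / 2) :=
      div_le_div₀ hDu0 h1mliQ (by
        have : (0:ℝ) < x * u := mul_pos hx0 hu0
        linarith) hliLB
  _ = 2 * D * (u ^ (m+1) / x) := by
      have h1 : u ^ (m+2) = u ^ (m+1) * u := by rw [← pow_succ]
      rw [h1]
      field_simp
end

section
/- Assume the prime number theorem in the form π(x) = li(x) + R(x) with R(x) ≪ x·exp(−C·δ(x)) where δ(x) = (log x)^{3/5}·(log log x)^{−1/5} and C > 0. Then the series ∑_{n=3}^∞ R(n)/(li(n)·(li(n)+R(n))) converges absolutely, and its tail satisfies ∑_{n > x} R(n)/(li(n)·(li(n)+R(n))) ≪ exp(−(C/3)·δ(x)) as x → ∞. -/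
open Filter Real

noncomputable def primePi (x : ℝ) : ℝ := Nat.primeCounting ⌊x⌋₊

noncomputable def R (x : ℝ) : ℝ := primePi x - li x

noncomputable def pntDelta (x : ℝ) : ℝ :=
  (Real.log x) ^ ((3:ℝ)/5) * (Real.log (Real.log x)) ^ (-(1:ℝ)/5)

lemma li_lower {x : ℝ} (hx : 3 ≤ x) : (x - 2) / Real.log x ≤ li x := by
  have h2x : (2:ℝ) ≤ x := by linarith
  have hlogx : 0 < Real.log x := Real.log_pos (by linarith)
  have hcont : ContinuousOn (fun t : ℝ => 1 / Real.log t) (Set.Icc 2 x) := by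
    intro t ht
    have ht2 : (2:ℝ) ≤ t := ht.1
    have hlt : 0 < Real.log t := Real.log_pos (by linarith)
    exact ((Real.continuousAt_log (by linarith)).inv₀ hlt.ne').continuousWithinAt.congr
      (fun y _ => one_div _) (one_div _)
  have hint : IntervalIntegrable (fun t : ℝ => 1 / Real.log t) MeasureTheory.volume 2 x := by
    rw [← Set.uIcc_of_le h2x] at hcont
    exact hcont.intervalIntegrable
  have hmono : ∫ t in (2:ℝ)..x, (1 / Real.log x) ≤ ∫ t in (2:ℝ)..x, 1 / Real.log t := by
    apply intervalIntegral.integral_mono_on h2x (intervalIntegrable_const) hint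
    intro t ht
    have hlt : 0 < Real.log t := Real.log_pos (by linarith [ht.1])
    exact one_div_le_one_div_of_le hlt (Real.log_le_log (by linarith [ht.1]) ht.2)
  rw [intervalIntegral.integral_const, smul_eq_mul] at hmono
  calc (x - 2) / Real.log x = (x - 2) * (1 / Real.log x) := by ring
  _ ≤ li x := hmono

-- log t ≤ 2 * sqrt t for t > 0, as rpow
lemma log_le_two_rpow {t : ℝ} (ht : 0 < t) : Real.log t ≤ 2 * t ^ ((1:ℝ)/2) := by
  have h := Real.add_one_le_exp (Real.log (t ^ ((1:ℝ)/2)))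
  have hrw : Real.log (t ^ ((1:ℝ)/2)) = Real.log t / 2 := by
    rw [Real.log_rpow ht]; ring
  have hexp : Real.exp (Real.log t / 2) = t ^ ((1:ℝ)/2) := by
    rw [← hrw]; exact Real.exp_log (Real.rpow_pos_of_pos ht _)
  rw [hrw, hexp] at h
  nlinarith [Real.rpow_pos_of_pos ht ((1:ℝ)/2)]

lemma deltaLB {x : ℝ} (hx : Real.exp (Real.exp 1) ≤ x) :
    (1/2) * (Real.log x) ^ ((1:ℝ)/2) ≤ pntDelta x := by
  set u := Real.log x with hu
  have hue : Real.exp 1 ≤ u := by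
    rw [hu, ← Real.log_exp (Real.exp 1)]
    exact Real.log_le_log (Real.exp_pos _) hx
  have hupos : 0 < u := lt_of_lt_of_le (Real.exp_pos 1) hue
  have hlogu : 1 ≤ Real.log u := by
    rw [← Real.log_exp 1]; exact Real.log_le_log (Real.exp_pos _) hue
  have hlogupos : 0 < Real.log u := by linarith
  have hkey : Real.log u ≤ 2 * u ^ ((1:ℝ)/2) := log_le_two_rpow hupos
  -- (log u)^(1/5) ≤ (2 u^(1/2))^(1/5) = 2^(1/5) * u^(1/10)
  have h5 : (Real.log u) ^ ((1:ℝ)/5) ≤ (2:ℝ) ^ ((1:ℝ)/5) * u ^ ((1:ℝ)/10) := by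
    calc (Real.log u) ^ ((1:ℝ)/5) ≤ (2 * u ^ ((1:ℝ)/2)) ^ ((1:ℝ)/5) :=
          Real.rpow_le_rpow hlogupos.le hkey (by norm_num)
    _ = (2:ℝ) ^ ((1:ℝ)/5) * u ^ ((1:ℝ)/10) := by
          rw [Real.mul_rpow (by norm_num) (Real.rpow_nonneg hupos.le _),
            ← Real.rpow_mul hupos.le]
          norm_num
  have h2le : ((2:ℝ)) ^ ((1:ℝ)/5) ≤ 2 := by
    calc ((2:ℝ)) ^ ((1:ℝ)/5) ≤ (2:ℝ) ^ (1:ℝ) :=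
      Real.rpow_le_rpow_of_exponent_le (by norm_num) (by norm_num)
    _ = 2 := Real.rpow_one 2
  have hlog5pos : 0 < (Real.log u) ^ ((1:ℝ)/5) := Real.rpow_pos_of_pos hlogupos _
  have hdelta : pntDelta x = u ^ ((3:ℝ)/5) / (Real.log u) ^ ((1:ℝ)/5) := by
    rw [pntDelta, ← hu, show (-1:ℝ)/5 = -((1:ℝ)/5) by norm_num,
      Real.rpow_neg hlogupos.le]
    exact (div_eq_mul_inv _ _).symm
  rw [hdelta, le_div_iff₀ hlog5pos]
  have hu10 : 0 < u ^ ((1:ℝ)/10) := Real.rpow_pos_of_pos hupos _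
  calc 1/2 * u ^ ((1:ℝ)/2) * (Real.log u) ^ ((1:ℝ)/5)
      ≤ 1/2 * u ^ ((1:ℝ)/2) * ((2:ℝ) ^ ((1:ℝ)/5) * u ^ ((1:ℝ)/10)) := by
        apply mul_le_mul_of_nonneg_left h5
        positivity
    _ ≤ 1/2 * u ^ ((1:ℝ)/2) * (2 * u ^ ((1:ℝ)/10)) := by
        apply mul_le_mul_of_nonneg_left (mul_le_mul_of_nonneg_right h2le hu10.le)
        positivity
    _ = u ^ ((1:ℝ)/2) * u ^ ((1:ℝ)/10) := by ring
    _ = u ^ ((3:ℝ)/5) := by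
        rw [← Real.rpow_add hupos]; norm_num

-- t - log t is monotone for 1 ≤ t
lemma sub_log_mono {a b : ℝ} (ha : 1 ≤ a) (hab : a ≤ b) :
    Real.log b - Real.log a ≤ b - a := by
  have hapos : 0 < a := by linarith
  have hbpos : 0 < b := by linarith
  have h : Real.log (b / a) ≤ b / a - 1 :=
    Real.log_le_sub_one_of_pos (div_pos hbpos hapos)
  rw [Real.log_div hbpos.ne' hapos.ne'] at h
  have : b / a - 1 ≤ b - a := by
    rw [div_sub_one hapos.ne', div_le_iff₀ hapos]
    nlinarith
  linarith

lemma deltaMono {x y : ℝ} (hx : Real.exp (Real.exp 1) ≤ x) (hxy : x ≤ y) :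
    pntDelta x ≤ pntDelta y := by
  set u := Real.log x with hu
  set v := Real.log y with hv
  have hxpos : (0:ℝ) < x := lt_of_lt_of_le (Real.exp_pos _) hx
  have hue : Real.exp 1 ≤ u := by
    rw [hu, ← Real.log_exp (Real.exp 1)]; exact Real.log_le_log (Real.exp_pos _) hx
  have huv : u ≤ v := Real.log_le_log hxpos hxy
  have hve : Real.exp 1 ≤ v := le_trans hue huv
  have hupos : 0 < u := lt_of_lt_of_le (Real.exp_pos 1) hue
  have hvpos : 0 < v := lt_of_lt_of_le (Real.exp_pos 1) hve
  have hlogu : 1 ≤ Real.log u := by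
    rw [← Real.log_exp 1]; exact Real.log_le_log (Real.exp_pos _) hue
  have hlogv : 1 ≤ Real.log v := by
    rw [← Real.log_exp 1]; exact Real.log_le_log (Real.exp_pos _) hve
  have hloguv : Real.log u ≤ Real.log v := Real.log_le_log hupos huv
  have hrep : ∀ w : ℝ, 0 < w → 0 < Real.log w →
      w ^ ((3:ℝ)/5) * (Real.log w) ^ (-(1:ℝ)/5)
        = Real.exp ((3/5) * Real.log w - (1/5) * Real.log (Real.log w)) := by
    intro w hw hlw
    rw [Real.rpow_def_of_pos hw, Real.rpow_def_of_pos hlw, ← Real.exp_add]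
    ring_nf
  rw [pntDelta, pntDelta, ← hu, ← hv, hrep u hupos (by linarith),
    hrep v hvpos (by linarith), Real.exp_le_exp]
  have hsub : Real.log (Real.log v) - Real.log (Real.log u) ≤ Real.log v - Real.log u :=
    sub_log_mono hlogu hloguv
  nlinarith

lemma master (c A : ℝ) (hc : 0 < c) :
    ∀ᶠ x in atTop, A + 4 * Real.log (Real.log x) ≤ c * pntDelta x := by
  have h1 : ∀ᶠ t in atTop, A + 4 * Real.log t ≤ (c/2) * t ^ ((1:ℝ)/2) := by
    have hlo := (isLittleO_log_rpow_atTop (by norm_num : (0:ℝ) < 1/2)).bound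
      (by positivity : (0:ℝ) < c/16)
    filter_upwards [hlo, eventually_ge_atTop (1:ℝ),
      (tendsto_rpow_atTop (by norm_num : (0:ℝ) < 1/2)).eventually_ge_atTop (4*A/c)]
      with t hb h1t hA
    have ht2 : (0:ℝ) ≤ t ^ ((1:ℝ)/2) := Real.rpow_nonneg (by linarith) _
    rw [Real.norm_eq_abs, Real.norm_eq_abs, abs_of_nonneg (Real.log_nonneg h1t),
      abs_of_nonneg ht2] at hb
    have hA' : A ≤ (c/4) * t ^ ((1:ℝ)/2) := by
      rw [div_le_iff₀ hc] at hA; nlinarith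
    nlinarith
  have h2 := Real.tendsto_log_atTop.eventually h1
  filter_upwards [h2, eventually_ge_atTop (Real.exp (Real.exp 1))] with x hx hxe
  have hd := deltaLB hxe
  calc A + 4 * Real.log (Real.log x) ≤ (c/2) * (Real.log x) ^ ((1:ℝ)/2) := hx
  _ ≤ c * pntDelta x := by nlinarith

lemma telescope_lb {m : ℕ} (hm : 3 ≤ m) :
    1 / (4 * (m:ℝ) * (Real.log m)^2) ≤ 1 / Real.log m - 1 / Real.log ((m:ℝ)+1) := by
  have hm3 : (3:ℝ) ≤ (m:ℝ) := by exact_mod_cast hm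
  have hlm : 0 < Real.log m := Real.log_pos (by linarith)
  have hlm1 : 0 < Real.log ((m:ℝ)+1) := Real.log_pos (by linarith)
  have hmpos : (0:ℝ) < m := by linarith
  have hdiff : 1 / (2*(m:ℝ)) ≤ Real.log ((m:ℝ)+1) - Real.log m := by
    have h := Real.log_le_sub_one_of_pos (show (0:ℝ) < m/(m+1) by positivity)
    rw [Real.log_div hmpos.ne' (by linarith)] at h
    have he : (m:ℝ)/(m+1) - 1 = -(1/((m:ℝ)+1)) := by field_simp; ring
    rw [he] at h
    have h2 : 1/(2*(m:ℝ)) ≤ 1/((m:ℝ)+1) :=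
      one_div_le_one_div_of_le (by linarith) (by linarith)
    linarith
  have hlog2 : Real.log ((m:ℝ)+1) ≤ 2 * Real.log m := by
    have h := Real.log_le_log (show (0:ℝ) < m+1 by linarith)
      (show (m:ℝ)+1 ≤ (m:ℝ)^2 by nlinarith)
    rwa [Real.log_pow, Nat.cast_ofNat] at h
  have heq : 1/Real.log m - 1/Real.log ((m:ℝ)+1)
      = (Real.log ((m:ℝ)+1) - Real.log m)/(Real.log m * Real.log ((m:ℝ)+1)) := by
    field_simp
  rw [heq]
  have heq2 : 1 / (4 * (m:ℝ) * (Real.log m)^2) = (1/(2*(m:ℝ))) / (2 * (Real.log m)^2) := by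
    field_simp; ring
  rw [heq2]
  apply div_le_div₀ (le_trans (by positivity) hdiff) hdiff (by positivity) (by nlinarith)

lemma key (C : ℝ) (hC : 0 < C)
    (hR : R =O[atTop] (fun x : ℝ => x * Real.exp (-C * pntDelta x))) :
    ∃ N₁ : ℕ, ∃ M : ℝ, 0 < M ∧ 3 ≤ N₁ ∧ ∀ m : ℕ, N₁ ≤ m →
      0 ≤ pntDelta m ∧
      |R m / (li m * (li m + R m))| ≤
        M * Real.exp (-(C/3) * pntDelta m) * (1 / Real.log m - 1 / Real.log ((m:ℝ)+1)) := by
  obtain ⟨K, hK, hbound⟩ := hR.exists_pos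
  rw [Asymptotics.isBigOWith_iff] at hbound
  have hll : ∀ᶠ x : ℝ in atTop, 1 ≤ Real.log (Real.log x) :=
    (Real.tendsto_log_atTop.comp Real.tendsto_log_atTop).eventually_ge_atTop 1
  have hev := hbound.and ((master C (Real.log (4*K)) hC).and
    ((master (2*C/3) 0 (by linarith)).and (hll.and (eventually_ge_atTop (16:ℝ)))))
  obtain ⟨x₀, hx₀⟩ := eventually_atTop.1 hev
  refine ⟨max 16 ⌈x₀⌉₊, 32 * K, by positivity, le_max_of_le_left (by norm_num), ?_⟩
  intro m hm
  have hm16 : (16:ℝ) ≤ (m:ℝ) := by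
    have := le_trans (le_max_left 16 ⌈x₀⌉₊) hm; exact_mod_cast this
  have hmx₀ : x₀ ≤ (m:ℝ) := by
    refine le_trans (Nat.le_ceil x₀) ?_
    exact_mod_cast le_trans (le_max_right 16 ⌈x₀⌉₊) hm
  obtain ⟨hRb, hm1, hm2, hloglog, -⟩ := hx₀ (m:ℝ) hmx₀
  have hm3 : (3:ℝ) ≤ (m:ℝ) := by linarith
  have hmpos : (0:ℝ) < m := by linarith
  have hlogm : 0 < Real.log m := Real.log_pos (by linarith)
  have hlogm1 : 1 < Real.log m := by
    by_contra h
    push_neg at h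
    have : Real.log (Real.log (m:ℝ)) ≤ 0 := Real.log_nonpos (by linarith) h
    linarith
  have hδpos : 0 ≤ pntDelta m := by
    rw [pntDelta]
    have h1 : (0:ℝ) < Real.log m := hlogm
    have h2 : (0:ℝ) < Real.log (Real.log (m:ℝ)) := by linarith
    positivity
  refine ⟨hδpos, ?_⟩
  set E := Real.exp (-C * pntDelta m) with hE
  set E1 := Real.exp (-(C/3) * pntDelta m) with hE1
  set E2 := Real.exp (-(2*C/3) * pntDelta m) with hE2
  have hEsplit : E = E1 * E2 := by
    rw [hE, hE1, hE2, ← Real.exp_add]; ring_nf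
  have hEpos : 0 < E := Real.exp_pos _
  have hE1pos : 0 < E1 := Real.exp_pos _
  have hE2pos : 0 < E2 := Real.exp_pos _
  -- |R m| ≤ K * m * E
  have hRabs : |R (m:ℝ)| ≤ K * ((m:ℝ) * E) := by
    have := hRb
    rw [Real.norm_eq_abs, Real.norm_eq_abs, abs_of_nonneg (by positivity : (0:ℝ) ≤ (m:ℝ) * E)] at this
    exact this
  -- E ≤ 1/(4 K log m)
  have hEsmall : E ≤ 1 / (4 * K * Real.log m) := by
    have hexp : Real.exp (Real.log (4*K) + Real.log (Real.log m)) = 4 * K * Real.log m := by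
      rw [Real.exp_add, Real.exp_log (by positivity), Real.exp_log hlogm]
    have h1 : Real.log (4*K) + Real.log (Real.log m) ≤ C * pntDelta m := by
      have h2 : (0:ℝ) ≤ Real.log (Real.log (m:ℝ)) := by linarith
      linarith [hm1]
    rw [hE]
    calc Real.exp (-C * pntDelta (m:ℝ)) ≤ Real.exp (-(Real.log (4*K) + Real.log (Real.log m))) := by
          rw [neg_mul]; apply Real.exp_le_exp.2; linarith
    _ = 1 / (4 * K * Real.log m) := by rw [Real.exp_neg, hexp, one_div]
  -- |R m| ≤ m / (4 log m)
  have hRsmall : |R (m:ℝ)| ≤ (m:ℝ) / (4 * Real.log m) := by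
    calc |R (m:ℝ)| ≤ K * ((m:ℝ) * E) := hRabs
    _ ≤ K * ((m:ℝ) * (1 / (4 * K * Real.log m))) := by
        apply mul_le_mul_of_nonneg_left (mul_le_mul_of_nonneg_left hEsmall hmpos.le) hK.le
    _ = (m:ℝ) / (4 * Real.log m) := by field_simp
  -- li lower bound
  have hli : (m:ℝ) / (2 * Real.log m) ≤ li m := by
    have h1 : (m:ℝ) / (2 * Real.log m) ≤ ((m:ℝ) - 2) / Real.log m := by
      rw [div_le_div_iff₀ (by positivity) hlogm]
      nlinarith
    exact h1.trans (li_lower hm3)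
  -- pi lower bound
  have hpi : (m:ℝ) / (4 * Real.log m) ≤ li m + R m := by
    have hna : -|R (m:ℝ)| ≤ R (m:ℝ) := neg_abs_le _
    have h4 : (m:ℝ) / (2 * Real.log m) - (m:ℝ) / (4 * Real.log m) = (m:ℝ) / (4 * Real.log m) := by
      field_simp; ring
    linarith
  have hlipos : 0 < li (m:ℝ) := lt_of_lt_of_le (by positivity) hli
  have hpipos : 0 < li (m:ℝ) + R m := lt_of_lt_of_le (by positivity) hpi
  -- denominator lower bound
  have hprod : (m:ℝ)^2 / (8 * (Real.log m)^2) ≤ li m * (li m + R m) := by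
    calc (m:ℝ)^2 / (8 * (Real.log m)^2)
        = ((m:ℝ) / (2 * Real.log m)) * ((m:ℝ) / (4 * Real.log m)) := by field_simp; ring
    _ ≤ li m * (li m + R m) := mul_le_mul hli hpi (by positivity) hlipos.le
  have hprodpos : (0:ℝ) < (m:ℝ)^2 / (8 * (Real.log m)^2) := by positivity
  -- main chain
  have hstep1 : |R (m:ℝ) / (li m * (li m + R m))|
      ≤ (K * ((m:ℝ) * E)) / ((m:ℝ)^2 / (8 * (Real.log m)^2)) := by
    rw [abs_div, abs_of_pos (by positivity : (0:ℝ) < li (m:ℝ) * (li m + R m))]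
    exact div_le_div₀ (by positivity) hRabs hprodpos hprod
  have hstep2 : (K * ((m:ℝ) * E)) / ((m:ℝ)^2 / (8 * (Real.log m)^2))
      = 8 * K * E1 * (((Real.log m)^4 * E2) * (1 / ((m:ℝ) * (Real.log m)^2))) := by
    rw [hEsplit]; field_simp
  -- (log m)^4 * E2 ≤ 1
  have hE2small : (Real.log m)^4 * E2 ≤ 1 := by
    have hexp : Real.exp (4 * Real.log (Real.log m)) = (Real.log m)^4 := by
      have h4 : (4:ℝ) * Real.log (Real.log (m:ℝ)) = Real.log ((Real.log (m:ℝ))^4) := by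
        rw [Real.log_pow]; push_cast; ring
      rw [h4, Real.exp_log (by positivity)]
    have h1 : 4 * Real.log (Real.log (m:ℝ)) ≤ (2*C/3) * pntDelta m := by linarith [hm2]
    have : E2 ≤ Real.exp (-(4 * Real.log (Real.log (m:ℝ)))) := by
      rw [hE2]; apply Real.exp_le_exp.2; linarith
    calc (Real.log m)^4 * E2 ≤ (Real.log m)^4 * Real.exp (-(4 * Real.log (Real.log (m:ℝ)))) :=
          mul_le_mul_of_nonneg_left this (by positivity)
    _ = 1 := by rw [Real.exp_neg, hexp]; field_simp
  -- telescope
  have htel : 1 / ((m:ℝ) * (Real.log m)^2)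
      ≤ 4 * (1 / Real.log m - 1 / Real.log ((m:ℝ)+1)) := by
    have h := telescope_lb (show 3 ≤ m by exact_mod_cast hm3)
    have : 1 / ((m:ℝ) * (Real.log m)^2) = 4 * (1 / (4 * (m:ℝ) * (Real.log m)^2)) := by
      field_simp
    rw [this]
    linarith
  have hgpos : 0 ≤ 1 / Real.log m - 1 / Real.log ((m:ℝ)+1) := by
    have h := telescope_lb (show 3 ≤ m by exact_mod_cast hm3)
    have : (0:ℝ) ≤ 1 / (4 * (m:ℝ) * (Real.log m)^2) := by positivity
    linarith
  calc |R (m:ℝ) / (li m * (li m + R m))|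
      ≤ 8 * K * E1 * (((Real.log m)^4 * E2) * (1 / ((m:ℝ) * (Real.log m)^2))) := by
        rw [← hstep2]; exact hstep1
    _ ≤ 8 * K * E1 * (1 * (4 * (1 / Real.log m - 1 / Real.log ((m:ℝ)+1)))) := by
        apply mul_le_mul_of_nonneg_left ?_ (by positivity)
        apply mul_le_mul hE2small htel (by positivity) (by norm_num)
    _ = 32 * K * E1 * (1 / Real.log m - 1 / Real.log ((m:ℝ)+1)) := by ring

lemma g_nonneg {m : ℕ} (hm : 3 ≤ m) :
    0 ≤ 1 / Real.log m - 1 / Real.log ((m:ℝ)+1) := by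
  have h := telescope_lb hm
  have hm3 : (3:ℝ) ≤ (m:ℝ) := by exact_mod_cast hm
  have : (0:ℝ) ≤ 1 / (4 * (m:ℝ) * (Real.log m)^2) := by
    have hlm : 0 < Real.log m := Real.log_pos (by linarith)
    positivity
  linarith

lemma log3_ge_one : (1:ℝ) ≤ Real.log 3 := by
  rw [← Real.log_exp 1]
  apply Real.log_le_log (Real.exp_pos 1)
  linarith [Real.exp_one_lt_d9]

-- cutoff telescoping function
noncomputable def Gc (n : ℕ) : ℝ := 1 / Real.log ((max n 3 : ℕ) : ℝ)

lemma Gc_nonneg (n : ℕ) : 0 ≤ Gc n := by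
  rw [Gc]
  have : (3:ℝ) ≤ ((max n 3 : ℕ):ℝ) := by exact_mod_cast le_max_right n 3
  have := Real.log_pos (show (1:ℝ) < ((max n 3 : ℕ):ℝ) by linarith)
  positivity

lemma gp_eq (n : ℕ) :
    (if 3 ≤ n then 1 / Real.log n - 1 / Real.log ((n:ℝ)+1) else 0) = Gc n - Gc (n+1) := by
  rcases le_or_gt 3 n with h | h
  · rw [if_pos h, Gc, Gc, max_eq_left h, max_eq_left (by omega)]
    push_cast
    ring_nf
  · rw [if_neg (by omega), Gc, Gc]
    interval_cases n <;> norm_num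

lemma gp_summable :
    Summable (fun n : ℕ => if 3 ≤ n then 1 / Real.log n - 1 / Real.log ((n:ℝ)+1) else 0) ∧
    (∑' n : ℕ, if 3 ≤ n then 1 / Real.log n - 1 / Real.log ((n:ℝ)+1) else 0) ≤ 1 := by
  have hnn : ∀ n : ℕ, 0 ≤ (if 3 ≤ n then 1 / Real.log n - 1 / Real.log ((n:ℝ)+1) else 0) := by
    intro n
    rcases le_or_gt 3 n with h | h
    · rw [if_pos h]; exact g_nonneg h
    · rw [if_neg (by omega)]
  have hsum : ∀ N : ℕ, ∑ i ∈ Finset.range N,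
      (if 3 ≤ i then 1 / Real.log i - 1 / Real.log ((i:ℝ)+1) else 0) ≤ 1 := by
    intro N
    have : ∑ i ∈ Finset.range N,
        (if 3 ≤ i then 1 / Real.log i - 1 / Real.log ((i:ℝ)+1) else 0)
        = Gc 0 - Gc N := by
      rw [← Finset.sum_range_sub' Gc N]
      exact Finset.sum_congr rfl (fun i _ => gp_eq i)
    rw [this]
    have h0 : Gc 0 ≤ 1 := by
      rw [Gc]
      norm_num
      exact inv_le_one_of_one_le₀ log3_ge_one
    linarith [Gc_nonneg N]
  exact ⟨summable_of_sum_range_le hnn hsum, Real.tsum_le_of_sum_range_le hnn hsum⟩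

theorem tail_estimate (C : ℝ) (hC : 0 < C)
    (hR : R =O[atTop] (fun x : ℝ => x * Real.exp (-C * pntDelta x))) :
    Summable (fun n : ℕ => |R (n + 3) / (li (n + 3) * (li (n + 3) + R (n + 3)))|) ∧
    (fun x : ℝ => ∑' n : ℕ,
        (if 3 ≤ n ∧ x < (n : ℝ) then
          R n / (li n * (li n + R n)) else 0))
      =O[atTop] (fun x : ℝ => Real.exp (-(C / 3) * pntDelta x)) := by
  obtain ⟨N₁, M, hM, hN₁3, hkey⟩ := key C hC hR
  constructor
  · -- Summability
    refine (summable_nat_add_iff N₁).mp ?_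
    set F : ℕ → ℝ := fun n => 1 / Real.log ((n + N₁ + 3 : ℕ) : ℝ) with hF
    have hFpos : ∀ n : ℕ, 0 < Real.log ((n + N₁ + 3 : ℕ) : ℝ) := by
      intro n
      apply Real.log_pos
      have : (3:ℝ) ≤ ((n + N₁ + 3 : ℕ) : ℝ) := by exact_mod_cast by omega
      linarith
    have hFnn : ∀ n : ℕ, 0 ≤ F n - F (n+1) := by
      intro n
      have h1 : F (n+1) ≤ F n := by
        rw [hF]
        apply one_div_le_one_div_of_le (hFpos n)
        apply Real.log_le_log (by positivity)
        exact_mod_cast by omega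
      linarith
    have hFsum : Summable (fun n : ℕ => M * (F n - F (n+1))) := by
      apply Summable.mul_left
      apply summable_of_sum_range_le (c := F 0) hFnn
      intro N
      rw [Finset.sum_range_sub' F N]
      have : 0 ≤ F N := by rw [hF]; positivity
      linarith
    apply Summable.of_nonneg_of_le (fun n => abs_nonneg _) ?_ hFsum
    intro n
    have hmk : N₁ ≤ n + N₁ + 3 := by omega
    obtain ⟨hδ, hb⟩ := hkey (n + N₁ + 3) hmk
    have hc1 : ((n + N₁ + 3 : ℕ) : ℝ) = (((n + N₁ : ℕ)):ℝ) + 3 := by push_cast; ring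
    have hc2 : ((n + N₁ + 3 : ℕ) : ℝ) + 1 = ((n + 1 + N₁ + 3 : ℕ) : ℝ) := by push_cast; ring
    have hE1 : Real.exp (-(C/3) * pntDelta ((n + N₁ + 3 : ℕ) : ℝ)) ≤ 1 := by
      apply Real.exp_le_one_iff.mpr
      nlinarith
    have hg : 0 ≤ 1 / Real.log ((n + N₁ + 3 : ℕ) : ℝ)
        - 1 / Real.log (((n + N₁ + 3 : ℕ) : ℝ) + 1) := g_nonneg (by omega)
    calc |R ((((n + N₁ : ℕ)):ℝ) + 3) / (li ((((n + N₁ : ℕ)):ℝ) + 3) *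
            (li ((((n + N₁ : ℕ)):ℝ) + 3) + R ((((n + N₁ : ℕ)):ℝ) + 3)))|
        = |R ((n + N₁ + 3 : ℕ) : ℝ) / (li ((n + N₁ + 3 : ℕ) : ℝ) *
            (li ((n + N₁ + 3 : ℕ) : ℝ) + R ((n + N₁ + 3 : ℕ) : ℝ)))| := by rw [hc1]
      _ ≤ M * Real.exp (-(C/3) * pntDelta ((n + N₁ + 3 : ℕ) : ℝ)) *
            (1 / Real.log ((n + N₁ + 3 : ℕ) : ℝ) - 1 / Real.log (((n + N₁ + 3 : ℕ) : ℝ) + 1)) := hb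
      _ ≤ M * 1 * (1 / Real.log ((n + N₁ + 3 : ℕ) : ℝ)
            - 1 / Real.log (((n + N₁ + 3 : ℕ) : ℝ) + 1)) := by
          apply mul_le_mul_of_nonneg_right (mul_le_mul_of_nonneg_left hE1 hM.le) hg
      _ = M * (F n - F (n+1)) := by
          rw [hF]
          dsimp only
          rw [hc2]
          ring
  · -- Tail bound
    rw [Asymptotics.isBigO_iff]
    refine ⟨M, ?_⟩
    filter_upwards [eventually_ge_atTop ((N₁:ℝ)), eventually_ge_atTop (Real.exp (Real.exp 1))]
      with x hx1 hx2
    obtain ⟨hgs, hgt⟩ := gp_summable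
    have hEx : 0 < Real.exp (-(C/3) * pntDelta x) := Real.exp_pos _
    have hterm : ∀ n : ℕ, ‖(if 3 ≤ n ∧ x < (n:ℝ) then R n / (li n * (li n + R n)) else 0)‖
        ≤ M * Real.exp (-(C/3) * pntDelta x) *
          (if 3 ≤ n then 1 / Real.log n - 1 / Real.log ((n:ℝ)+1) else 0) := by
      intro n
      by_cases hP : 3 ≤ n ∧ x < (n:ℝ)
      · rw [if_pos hP, if_pos hP.1]
        have hn : N₁ ≤ n := by
          have h := lt_of_le_of_lt hx1 hP.2
          exact_mod_cast h.le
        obtain ⟨hδ, hb⟩ := hkey n hn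
        have hmono : pntDelta x ≤ pntDelta n := deltaMono hx2 hP.2.le
        have hE : Real.exp (-(C/3) * pntDelta (n:ℝ)) ≤ Real.exp (-(C/3) * pntDelta x) := by
          apply Real.exp_le_exp.2
          nlinarith
        rw [Real.norm_eq_abs]
        calc |R (n:ℝ) / (li n * (li n + R n))|
            ≤ M * Real.exp (-(C/3) * pntDelta (n:ℝ)) *
              (1 / Real.log n - 1 / Real.log ((n:ℝ)+1)) := hb
          _ ≤ M * Real.exp (-(C/3) * pntDelta x) *
              (1 / Real.log n - 1 / Real.log ((n:ℝ)+1)) := by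
            apply mul_le_mul_of_nonneg_right (mul_le_mul_of_nonneg_left hE hM.le)
              (g_nonneg hP.1)
      · rw [if_neg hP, norm_zero]
        have hgn : 0 ≤ (if 3 ≤ n then 1 / Real.log n - 1 / Real.log ((n:ℝ)+1) else 0) := by
          by_cases h3 : 3 ≤ n
          · rw [if_pos h3]; exact g_nonneg h3
          · rw [if_neg h3]
        positivity
    have hmaj : Summable (fun n : ℕ => M * Real.exp (-(C/3) * pntDelta x) *
        (if 3 ≤ n then 1 / Real.log n - 1 / Real.log ((n:ℝ)+1) else 0)) := hgs.mul_left _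
    have hts : Summable (fun n : ℕ =>
        ‖(if 3 ≤ n ∧ x < (n:ℝ) then R n / (li n * (li n + R n)) else 0)‖) :=
      Summable.of_nonneg_of_le (fun n => norm_nonneg _) hterm hmaj
    calc ‖∑' n : ℕ, (if 3 ≤ n ∧ x < (n:ℝ) then R n / (li n * (li n + R n)) else 0)‖
        ≤ ∑' n : ℕ, ‖(if 3 ≤ n ∧ x < (n:ℝ) then R n / (li n * (li n + R n)) else 0)‖ :=
          norm_tsum_le_tsum_norm hts
      _ ≤ ∑' n : ℕ, M * Real.exp (-(C/3) * pntDelta x) *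
            (if 3 ≤ n then 1 / Real.log n - 1 / Real.log ((n:ℝ)+1) else 0) :=
          Summable.tsum_le_tsum hterm hts hmaj
      _ = M * Real.exp (-(C/3) * pntDelta x) *
            ∑' n : ℕ, (if 3 ≤ n then 1 / Real.log n - 1 / Real.log ((n:ℝ)+1) else 0) :=
          tsum_mul_left
      _ ≤ M * Real.exp (-(C/3) * pntDelta x) * 1 :=
          mul_le_mul_of_nonneg_left hgt (by positivity)
      _ = M * ‖Real.exp (-(C/3) * pntDelta x)‖ := by
          rw [Real.norm_eq_abs, abs_of_pos hEx]; ring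
end

section
/- Assume π(x) = li(x) + O(x·exp(−C·(log x)^{3/5}·(log log x)^{−1/5})) for some C > 0. Then ∑_{2 ≤ n ≤ x} 1/π(n) = (1/2)·log² x − log x − log log x + O(1) as x → ∞. -/
open Filter Real

section
open intervalIntegral MeasureTheory Asymptotics

noncomputable def aa (t : ℝ) : ℝ := Real.log t / t - 1 / t - 1 / (t * Real.log t)
noncomputable def F (t : ℝ) : ℝ :=
  Real.log t ^ 2 / 2 - Real.log t - Real.log (Real.log t)


lemma hasDerivAt_div_log_pow (k : ℕ) {s : ℝ} (hs : 1 < s) :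
    HasDerivAt (fun u => u / Real.log u ^ k)
      (1 / Real.log s ^ k - k / Real.log s ^ (k + 1)) s := by
  have hs0 : s ≠ 0 := by positivity
  have hlog : 0 < Real.log s := Real.log_pos hs
  have h1 : HasDerivAt Real.log s⁻¹ s := Real.hasDerivAt_log hs0
  have h2 : HasDerivAt (fun u => Real.log u ^ k) (k * Real.log s ^ (k - 1) * s⁻¹) s := h1.pow k
  have h3 := (hasDerivAt_id s).div h2 (by positivity)
  refine h3.congr_deriv ?_
  rcases Nat.eq_zero_or_pos k with hk | hk
  · subst hk; simp
  · obtain ⟨m, rfl⟩ : ∃ m, k = m + 1 := ⟨k - 1, (Nat.succ_pred_eq_of_pos hk).symm⟩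
    simp only [Nat.add_sub_cancel, id]
    field_simp
    ring

lemma integrable_inv_log_pow (k : ℕ) {A B : ℝ} (hA : 2 ≤ A) (hAB : A ≤ B) :
    IntervalIntegrable (fun s : ℝ => 1 / Real.log s ^ k) volume A B := by
  apply ContinuousOn.intervalIntegrable
  rw [Set.uIcc_of_le hAB]
  refine ContinuousOn.div continuousOn_const (ContinuousOn.pow ?_ k) ?_
  · exact Real.continuousOn_log.mono fun s hs =>
      ne_of_gt (lt_of_lt_of_le (by norm_num) (hA.trans hs.1))
  · intro s hs
    exact pow_ne_zero _ (ne_of_gt (Real.log_pos (lt_of_lt_of_le one_lt_two (hA.trans hs.1))))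

lemma integrable_k_inv_log_pow (k j : ℕ) {A B : ℝ} (hA : 2 ≤ A) (hAB : A ≤ B) :
    IntervalIntegrable (fun s : ℝ => (k : ℝ) / Real.log s ^ j) volume A B := by
  simpa [mul_one_div, div_eq_mul_inv] using (integrable_inv_log_pow j hA hAB).const_mul (k : ℝ)

lemma integral_step (k : ℕ) {t : ℝ} (ht : 2 ≤ t) :
    ∫ s in (2:ℝ)..t, 1 / Real.log s ^ k
      = t / Real.log t ^ k - 2 / Real.log 2 ^ k
        + k * ∫ s in (2:ℝ)..t, 1 / Real.log s ^ (k + 1) := by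
  have hderiv : ∀ s ∈ Set.uIcc (2:ℝ) t,
      HasDerivAt (fun u => u / Real.log u ^ k)
        (1 / Real.log s ^ k - k / Real.log s ^ (k + 1)) s := by
    intro s hs
    rw [Set.uIcc_of_le ht] at hs
    exact hasDerivAt_div_log_pow k (lt_of_lt_of_le one_lt_two hs.1)
  have hint : IntervalIntegrable
      (fun s => 1 / Real.log s ^ k - (k : ℝ) / Real.log s ^ (k + 1)) volume 2 t :=
    (integrable_inv_log_pow k le_rfl ht).sub (integrable_k_inv_log_pow k (k+1) le_rfl ht)
  have heq := intervalIntegral.integral_eq_sub_of_hasDerivAt hderiv hint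
  rw [intervalIntegral.integral_sub (integrable_inv_log_pow k le_rfl ht)
      (integrable_k_inv_log_pow k (k+1) le_rfl ht)] at heq
  have : ∫ s in (2:ℝ)..t, (k : ℝ) / Real.log s ^ (k + 1)
      = k * ∫ s in (2:ℝ)..t, 1 / Real.log s ^ (k + 1) := by
    rw [← intervalIntegral.integral_const_mul]
    congr 1
    funext s
    rw [mul_one_div]
  rw [this] at heq
  linarith

lemma li_eq {t : ℝ} (ht : 2 ≤ t) :
    li t = t / Real.log t + t / Real.log t ^ 2 + 2 * t / Real.log t ^ 3
      - (2 / Real.log 2 + 2 / Real.log 2 ^ 2 + 4 / Real.log 2 ^ 3)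
      + 6 * ∫ s in (2:ℝ)..t, 1 / Real.log s ^ 4 := by
  have h1 := integral_step 1 ht
  have h2 := integral_step 2 ht
  have h3 := integral_step 3 ht
  have : li t = ∫ s in (2:ℝ)..t, 1 / Real.log s ^ 1 := by
    unfold li; congr 1; funext s; rw [pow_one]
  rw [this, h1]
  norm_num at h1 h2 h3 ⊢
  rw [h2, h3]
  ring

lemma J4_nonneg {t : ℝ} (ht : 2 ≤ t) : 0 ≤ ∫ s in (2:ℝ)..t, 1 / Real.log s ^ 4 := by
  apply intervalIntegral.integral_nonneg ht
  intro s hs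
  have : 0 < Real.log s := Real.log_pos (lt_of_lt_of_le one_lt_two hs.1)
  positivity

lemma J4_bound {t : ℝ} (ht : 4 ≤ t) :
    ∫ s in (2:ℝ)..t, 1 / Real.log s ^ 4
      ≤ Real.sqrt t / Real.log 2 ^ 4 + 16 * t / Real.log t ^ 4 := by
  have h2t : (2:ℝ) ≤ t := by linarith
  have hst : Real.sqrt t ≤ t := by
    nlinarith [Real.sq_sqrt (by linarith : (0:ℝ) ≤ t), Real.sqrt_nonneg t,
      Real.sqrt_le_sqrt ht, Real.sqrt_nonneg 4]
  have h2s : (2:ℝ) ≤ Real.sqrt t := by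
    have : Real.sqrt 4 = 2 := by
      rw [show (4:ℝ) = 2^2 by norm_num, Real.sqrt_sq (by norm_num)]
    linarith [Real.sqrt_le_sqrt ht]
  have hlog2 : (0:ℝ) < Real.log 2 := Real.log_pos one_lt_two
  have hlogt : (0:ℝ) < Real.log t := Real.log_pos (by linarith)
  -- split the integral
  have hsplit : ∫ s in (2:ℝ)..t, 1 / Real.log s ^ 4
      = (∫ s in (2:ℝ)..Real.sqrt t, 1 / Real.log s ^ 4)
        + ∫ s in Real.sqrt t..t, 1 / Real.log s ^ 4 := by
    rw [intervalIntegral.integral_add_adjacent_intervals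
      (integrable_inv_log_pow 4 le_rfl h2s) (integrable_inv_log_pow 4 h2s hst)]
  rw [hsplit]
  have hb1 : (∫ s in (2:ℝ)..Real.sqrt t, 1 / Real.log s ^ 4)
      ≤ Real.sqrt t / Real.log 2 ^ 4 := by
    have : (∫ s in (2:ℝ)..Real.sqrt t, 1 / Real.log s ^ 4)
        ≤ ∫ _ in (2:ℝ)..Real.sqrt t, 1 / Real.log 2 ^ 4 := by
      apply intervalIntegral.integral_mono_on h2s (integrable_inv_log_pow 4 le_rfl h2s)
        intervalIntegrable_const
      intro s hs
      have hls : Real.log 2 ≤ Real.log s := Real.log_le_log (by norm_num) hs.1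
      exact one_div_le_one_div_of_le (by positivity)
        (pow_le_pow_left₀ hlog2.le hls 4)
    rw [intervalIntegral.integral_const] at this
    calc (∫ s in (2:ℝ)..Real.sqrt t, 1 / Real.log s ^ 4)
        ≤ (Real.sqrt t - 2) * (1 / Real.log 2 ^ 4) := by simpa [smul_eq_mul] using this
      _ ≤ Real.sqrt t / Real.log 2 ^ 4 := by
          have h2 : Real.sqrt t / Real.log 2 ^ 4 = Real.sqrt t * (1 / Real.log 2 ^ 4) := by ring
          rw [h2]
          exact mul_le_mul_of_nonneg_right (by linarith) (by positivity)
  have hb2 : (∫ s in Real.sqrt t..t, 1 / Real.log s ^ 4)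
      ≤ 16 * t / Real.log t ^ 4 := by
    have hlogsq : Real.log (Real.sqrt t) = Real.log t / 2 := Real.log_sqrt (by linarith)
    have : (∫ s in Real.sqrt t..t, 1 / Real.log s ^ 4)
        ≤ ∫ _ in Real.sqrt t..t, 1 / (Real.log t / 2) ^ 4 := by
      apply intervalIntegral.integral_mono_on hst (integrable_inv_log_pow 4 h2s hst)
        intervalIntegrable_const
      intro s hs
      have hls : Real.log (Real.sqrt t) ≤ Real.log s :=
        Real.log_le_log (by linarith) hs.1
      rw [hlogsq] at hls
      have h0 : (0:ℝ) < Real.log t / 2 := by linarith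
      exact one_div_le_one_div_of_le (by positivity)
        (pow_le_pow_left₀ h0.le hls 4)
    rw [intervalIntegral.integral_const] at this
    have h0 : (0:ℝ) < Real.log t / 2 := by linarith
    calc (∫ s in Real.sqrt t..t, 1 / Real.log s ^ 4)
        ≤ (t - Real.sqrt t) * (1 / (Real.log t / 2) ^ 4) := by simpa [smul_eq_mul] using this
      _ ≤ t * (1 / (Real.log t / 2) ^ 4) := by
          gcongr
          linarith [Real.sqrt_nonneg t]
      _ = 16 * t / Real.log t ^ 4 := by
          field_simp
          ring
  linarith

lemma log_one_le {t : ℝ} (h : Real.exp 1 ≤ t) : 1 ≤ Real.log t := by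
  have := Real.log_le_log (Real.exp_pos 1) h
  rwa [Real.log_exp] at this

lemma one_isBigO_t_div_log : (fun _ : ℝ => (1:ℝ)) =O[atTop] fun t => t / Real.log t ^ 4 := by
  have h := (Real.isLittleO_pow_log_id_atTop (n := 4)).bound (c := 1) one_pos
  apply IsBigO.of_bound 1
  filter_upwards [h, eventually_ge_atTop (Real.exp 1)] with t h1 h2
  have ht0 : (0:ℝ) < t := lt_of_lt_of_le (Real.exp_pos 1) h2
  have hlt : (1:ℝ) ≤ Real.log t := log_one_le h2
  have hl4 : Real.log t ^ 4 ≤ t := by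
    have : |Real.log t ^ 4| ≤ 1 * |t| := by simpa [Real.norm_eq_abs] using h1
    rw [one_mul, abs_of_pos ht0] at this
    exact le_trans (le_abs_self _) this
  have hpos : (0:ℝ) < Real.log t ^ 4 := by positivity
  rw [Real.norm_eq_abs, Real.norm_eq_abs, abs_one, one_mul,
    abs_of_pos (by positivity : (0:ℝ) < t / Real.log t ^ 4)]
  rw [le_div_iff₀ hpos, one_mul]
  exact hl4

lemma sqrt_isBigO_t_div_log :
    (fun t : ℝ => Real.sqrt t) =O[atTop] fun t => t / Real.log t ^ 4 := by
  have h := (isLittleO_log_rpow_rpow_atTop (s := 1/2) 4 (by norm_num)).bound (c := 1) one_pos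
  apply IsBigO.of_bound 1
  filter_upwards [h, eventually_ge_atTop (Real.exp 1)] with t h1 h2
  have ht0 : (0:ℝ) < t := lt_of_lt_of_le (Real.exp_pos 1) h2
  have hlt : (1:ℝ) ≤ Real.log t := log_one_le h2
  have hpos : (0:ℝ) < Real.log t ^ 4 := by positivity
  have hl4 : Real.log t ^ 4 ≤ Real.sqrt t := by
    have e1 : Real.log t ^ ((4:ℕ):ℝ) = Real.log t ^ (4:ℕ) := Real.rpow_natCast _ 4
    have e2 : t ^ ((1:ℝ)/2) = Real.sqrt t := (Real.sqrt_eq_rpow t).symm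
    have : |Real.log t ^ ((4:ℕ):ℝ)| ≤ 1 * |t ^ ((1:ℝ)/2)| := by
      simpa [Real.norm_eq_abs] using h1
    rw [e1, e2, one_mul, abs_of_nonneg (Real.sqrt_nonneg t)] at this
    exact le_trans (le_abs_self _) this
  rw [Real.norm_eq_abs, Real.norm_eq_abs, abs_of_nonneg (Real.sqrt_nonneg t), one_mul,
    abs_of_pos (by positivity : (0:ℝ) < t / Real.log t ^ 4)]
  rw [le_div_iff₀ hpos]
  calc Real.sqrt t * Real.log t ^ 4 ≤ Real.sqrt t * Real.sqrt t :=
        mul_le_mul_of_nonneg_left hl4 (Real.sqrt_nonneg t)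
    _ = t := Real.mul_self_sqrt ht0.le

lemma li_asymp :
    (fun t => li t - (t / Real.log t + t / Real.log t ^ 2 + 2 * t / Real.log t ^ 3))
      =O[atTop] fun t => t / Real.log t ^ 4 := by
  set c₂ : ℝ := 2 / Real.log 2 + 2 / Real.log 2 ^ 2 + 4 / Real.log 2 ^ 3 with hc₂
  have heq : (fun t => li t - (t / Real.log t + t / Real.log t ^ 2 + 2 * t / Real.log t ^ 3))
      =ᶠ[atTop] fun t => -c₂ + 6 * ∫ s in (2:ℝ)..t, 1 / Real.log s ^ 4 := by
    filter_upwards [eventually_ge_atTop (2:ℝ)] with t ht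
    rw [li_eq ht]; ring
  apply heq.trans_isBigO
  have hJ : (fun t : ℝ => ∫ s in (2:ℝ)..t, 1 / Real.log s ^ 4)
      =O[atTop] fun t => Real.sqrt t + t / Real.log t ^ 4 := by
    apply IsBigO.of_bound (max (1 / Real.log 2 ^ 4) 16)
    filter_upwards [eventually_ge_atTop (4:ℝ), eventually_ge_atTop (Real.exp 1)] with t ht het
    have hlt : (1:ℝ) ≤ Real.log t := log_one_le het
    have h0 : (0:ℝ) ≤ ∫ s in (2:ℝ)..t, 1 / Real.log s ^ 4 := J4_nonneg (by linarith)
    have hb := J4_bound ht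
    have hs0 : (0:ℝ) ≤ Real.sqrt t := Real.sqrt_nonneg t
    have hd0 : (0:ℝ) ≤ t / Real.log t ^ 4 := by positivity
    rw [Real.norm_eq_abs, Real.norm_eq_abs, abs_of_nonneg h0, abs_of_nonneg (by linarith)]
    have hK1 : 1 / Real.log 2 ^ 4 ≤ max (1 / Real.log 2 ^ 4) 16 := le_max_left _ _
    have hK2 : (16:ℝ) ≤ max (1 / Real.log 2 ^ 4) 16 := le_max_right _ _
    calc (∫ s in (2:ℝ)..t, 1 / Real.log s ^ 4)
        ≤ Real.sqrt t / Real.log 2 ^ 4 + 16 * t / Real.log t ^ 4 := hb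
      _ = (1 / Real.log 2 ^ 4) * Real.sqrt t + 16 * (t / Real.log t ^ 4) := by ring
      _ ≤ max (1 / Real.log 2 ^ 4) 16 * Real.sqrt t
            + max (1 / Real.log 2 ^ 4) 16 * (t / Real.log t ^ 4) := by
          exact add_le_add (mul_le_mul_of_nonneg_right hK1 hs0)
            (mul_le_mul_of_nonneg_right hK2 hd0)
      _ = max (1 / Real.log 2 ^ 4) 16 * (Real.sqrt t + t / Real.log t ^ 4) := by ring
  have h2 : (fun t : ℝ => Real.sqrt t + t / Real.log t ^ 4)
      =O[atTop] fun t => t / Real.log t ^ 4 :=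
    sqrt_isBigO_t_div_log.add (isBigO_refl _ _)
  exact ((one_isBigO_t_div_log.const_mul_left (-c₂)).add
    ((hJ.trans h2).const_mul_left 6)).congr_left (by intro t; simp)

lemma exp_bound (C : ℝ) (hC : 0 < C) :
    (fun t => t * Real.exp (-C * pntDelta t)) =O[atTop] fun t => t / Real.log t ^ 4 := by
  -- first: eventually in u, 4 * log u ≤ C * (u ^ (3/5) * (log u) ^ (-(1:ℝ)/5))
  have key : ∀ᶠ u : ℝ in atTop,
      4 * Real.log u ≤ C * (u ^ ((3:ℝ)/5) * (Real.log u) ^ (-(1:ℝ)/5)) := by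
    have h := (isLittleO_log_rpow_rpow_atTop (s := 3/5) (6/5) (by norm_num)).bound
      (c := C/4) (by positivity)
    filter_upwards [h, eventually_ge_atTop (Real.exp 1), eventually_ge_atTop (1:ℝ)]
      with u h1 h2 h3
    have hu0 : (0:ℝ) < u := by linarith
    have hv1 : (1:ℝ) ≤ Real.log u := by
      have := Real.log_le_log (Real.exp_pos 1) h2
      rwa [Real.log_exp] at this
    have hv0 : (0:ℝ) < Real.log u := by linarith
    set v := Real.log u
    have hnorm : v ^ ((6:ℝ)/5) ≤ C/4 * u ^ ((3:ℝ)/5) := by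
      have hv6 : (0:ℝ) ≤ v ^ ((6:ℝ)/5) := Real.rpow_nonneg hv0.le _
      have hu35 : (0:ℝ) ≤ u ^ ((3:ℝ)/5) := Real.rpow_nonneg hu0.le _
      have := h1
      rw [Real.norm_eq_abs, Real.norm_eq_abs, abs_of_nonneg hv6, abs_of_nonneg hu35] at this
      exact this
    -- v^{6/5} = v * v^{1/5}
    have hsplit : v ^ ((6:ℝ)/5) = v * v ^ ((1:ℝ)/5) := by
      rw [show ((6:ℝ)/5) = 1 + (1:ℝ)/5 by norm_num, Real.rpow_add hv0, Real.rpow_one]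
    have hpos15 : (0:ℝ) < v ^ ((1:ℝ)/5) := Real.rpow_pos_of_pos hv0 _
    have hneg : v ^ (-(1:ℝ)/5) = (v ^ ((1:ℝ)/5))⁻¹ := by
      rw [show (-(1:ℝ)/5) = -((1:ℝ)/5) by norm_num, Real.rpow_neg hv0.le]
    rw [hneg]
    rw [← mul_le_mul_iff_left₀ hpos15]
    calc 4 * v * v ^ ((1:ℝ)/5) = 4 * (v * v ^ ((1:ℝ)/5)) := by ring
      _ = 4 * v ^ ((6:ℝ)/5) := by rw [hsplit]
      _ ≤ 4 * (C/4 * u ^ ((3:ℝ)/5)) := by linarith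
      _ = C * (u ^ ((3:ℝ)/5) * (v ^ ((1:ℝ)/5))⁻¹) * v ^ ((1:ℝ)/5) := by
          field_simp
  have key2 : ∀ᶠ t : ℝ in atTop, 4 * Real.log (Real.log t) ≤ C * pntDelta t :=
    Real.tendsto_log_atTop.eventually key
  apply IsBigO.of_bound 1
  filter_upwards [key2, eventually_ge_atTop (Real.exp (Real.exp 1))] with t h1 h2
  have ht0 : (0:ℝ) < t := lt_of_lt_of_le (Real.exp_pos _) h2
  have hu1 : Real.exp 1 ≤ Real.log t := by
    have := Real.log_le_log (Real.exp_pos _) h2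
    rwa [Real.log_exp] at this
  have hu0 : (0:ℝ) < Real.log t := lt_of_lt_of_le (Real.exp_pos 1) hu1
  have hexp : Real.exp (-C * pntDelta t) ≤ 1 / Real.log t ^ 4 := by
    have h4 : Real.exp (-C * pntDelta t) ≤ Real.exp (-(4 * Real.log (Real.log t))) := by
      apply Real.exp_le_exp.2
      linarith
    have : Real.exp (-(4 * Real.log (Real.log t))) = 1 / Real.log t ^ 4 := by
      rw [Real.exp_neg, show (4:ℝ) * Real.log (Real.log t)
          = (4:ℕ) * Real.log (Real.log t) by norm_num, Real.exp_nat_mul, Real.exp_log hu0]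
      rw [one_div]
    linarith
  rw [Real.norm_eq_abs, Real.norm_eq_abs,
    abs_of_nonneg (by positivity : (0:ℝ) ≤ t * Real.exp (-C * pntDelta t)),
    abs_of_nonneg (by positivity : (0:ℝ) ≤ t / Real.log t ^ 4), one_mul]
  calc t * Real.exp (-C * pntDelta t) ≤ t * (1 / Real.log t ^ 4) :=
        mul_le_mul_of_nonneg_left hexp ht0.le
    _ = t / Real.log t ^ 4 := by ring

lemma key_lemma
    (hpi : (fun t => primePi t - (t / Real.log t + t / Real.log t ^ 2 + 2 * t / Real.log t ^ 3))
      =O[atTop] fun t => t / Real.log t ^ 4) :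
    ∃ K : ℝ, 0 < K ∧ ∀ᶠ t : ℝ in atTop,
    |1 / primePi t - aa t| ≤ K / (t * Real.log t ^ 2) := by
  obtain ⟨c, hc0, hc⟩ := hpi.exists_pos
  rw [IsBigOWith] at hc
  refine ⟨8 + 2 * c, by positivity, ?_⟩
  filter_upwards [hc, eventually_ge_atTop (1:ℝ),
    Real.tendsto_log_atTop.eventually_ge_atTop (max 2 (4 * c))] with t hct ht1 hL4c
  set L := Real.log t with hL
  have ht0 : (0:ℝ) < t := by linarith
  have hL2 : (2:ℝ) ≤ L := le_trans (le_max_left _ _) hL4c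
  have hL0 : (0:ℝ) < L := by linarith
  have hLc : 4 * c ≤ L := le_trans (le_max_right _ _) hL4c
  set m : ℝ := t / L + t / L ^ 2 + 2 * t / L ^ 3 with hm
  have hPm : |primePi t - m| ≤ c * (t / L ^ 4) := by
    have := hct
    rw [Real.norm_eq_abs, Real.norm_eq_abs, abs_of_pos (by positivity : (0:ℝ) < t / L ^ 4)]
      at this
    exact this
  have hPlow : t / (2 * L) ≤ primePi t := by
    have h1 : primePi t ≥ m - c * (t / L ^ 4) := by
      have := abs_le.1 hPm
      linarith [this.2]
    have h2 : m ≥ t / L := by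
      have ha : (0:ℝ) ≤ t / L ^ 2 := by positivity
      have hb : (0:ℝ) ≤ 2 * t / L ^ 3 := by positivity
      simp only [hm]; linarith
    have h3 : c * (t / L ^ 4) ≤ t / (2 * L) := by
      have expand : t / (2 * L) - c * (t / L ^ 4) = t * (L ^ 3 - 2 * c) / (2 * L ^ 4) := by
        field_simp
      have hnn : (0:ℝ) ≤ t * (L ^ 3 - 2 * c) / (2 * L ^ 4) := by
        apply div_nonneg _ (by positivity)
        apply mul_nonneg ht0.le
        nlinarith [hLc, hL2]
      linarith
    have h4 : t / L - t / (2 * L) = t / (2 * L) := by field_simp; ring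
    linarith
  have hPpos : (0:ℝ) < primePi t := lt_of_lt_of_le (by positivity) hPlow
  have hPinv : 1 / primePi t ≤ 2 * L / t := by
    rw [div_le_div_iff₀ hPpos ht0]
    rw [div_le_iff₀ (by positivity)] at hPlow
    nlinarith
  have haa : aa t = (L - 1 - 1 / L) / t := by
    simp only [aa, ← hL]
    field_simp
  have hinvL : 1 / L ≤ 1 / 2 := by
    rw [div_le_div_iff₀ hL0 (by norm_num)]; linarith
  have hnum : (0:ℝ) ≤ L - 1 - 1 / L := by linarith
  have haabound : |aa t| ≤ L / t := by
    rw [haa, abs_of_nonneg (div_nonneg hnum ht0.le)]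
    gcongr
    have : (0:ℝ) < 1 / L := by positivity
    linarith
  have hmaa : m * aa t = 1 - 3 / L ^ 3 - 2 / L ^ 4 := by
    rw [haa]; simp only [hm]; field_simp; ring
  have hid : 1 - primePi t * aa t = 3 / L ^ 3 + 2 / L ^ 4 - (primePi t - m) * aa t := by
    have e : (primePi t - m) * aa t = primePi t * aa t - m * aa t := by ring
    rw [e, hmaa]; ring
  have herr : |(primePi t - m) * aa t| ≤ c / L ^ 3 := by
    rw [abs_mul]
    calc |primePi t - m| * |aa t| ≤ (c * (t / L ^ 4)) * (L / t) := by
          apply mul_le_mul hPm haabound (abs_nonneg _) (by positivity)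
      _ = c / L ^ 3 := by field_simp
  have h24 : 2 / L ^ 4 ≤ 1 / L ^ 3 := by
    rw [div_le_div_iff₀ (by positivity) (by positivity)]
    nlinarith [mul_le_mul_of_nonneg_right hL2 (pow_pos hL0 3).le]
  have habs : |1 - primePi t * aa t| ≤ (4 + c) / L ^ 3 := by
    rw [hid]
    have t1 : (0:ℝ) ≤ 3 / L ^ 3 + 2 / L ^ 4 := by positivity
    calc |3 / L ^ 3 + 2 / L ^ 4 - (primePi t - m) * aa t|
        ≤ |3 / L ^ 3 + 2 / L ^ 4| + |(primePi t - m) * aa t| := abs_sub _ _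
      _ ≤ (3 / L ^ 3 + 2 / L ^ 4) + c / L ^ 3 := by
          rw [abs_of_nonneg t1]; linarith
      _ ≤ (4 + c) / L ^ 3 := by
          have e : (4 + c) / L ^ 3 = 3 / L ^ 3 + 1 / L ^ 3 + c / L ^ 3 := by field_simp; ring
          linarith
  have hsplit : 1 / primePi t - aa t = (1 - primePi t * aa t) / primePi t := by
    field_simp
  rw [hsplit, abs_div, abs_of_pos hPpos]
  calc |1 - primePi t * aa t| / primePi t
      = |1 - primePi t * aa t| * (1 / primePi t) := by ring
    _ ≤ ((4 + c) / L ^ 3) * (2 * L / t) := by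
        apply mul_le_mul habs hPinv (by positivity) (by positivity)
    _ = (8 + 2 * c) / (t * L ^ 2) := by field_simp; ring

lemma integral_g1 {A B : ℝ} (hA : 3 ≤ A) (hAB : A ≤ B) :
    ∫ t in A..B, Real.log t / t = Real.log B ^ 2 / 2 - Real.log A ^ 2 / 2 := by
  apply intervalIntegral.integral_eq_sub_of_hasDerivAt
  · intro s hs
    rw [Set.uIcc_of_le hAB] at hs
    have hs0 : (0:ℝ) < s := by linarith [hs.1]
    have h1 : HasDerivAt Real.log s⁻¹ s := Real.hasDerivAt_log (ne_of_gt hs0)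
    have h2 := (h1.pow 2).div_const 2
    refine h2.congr_deriv ?_
    field_simp
    ring
  · apply ContinuousOn.intervalIntegrable
    rw [Set.uIcc_of_le hAB]
    apply ContinuousOn.div
    · exact Real.continuousOn_log.mono fun s hs => ne_of_gt (by linarith [hs.1] : (0:ℝ) < s)
    · exact continuousOn_id
    · intro s hs; exact ne_of_gt (by linarith [hs.1])

lemma integral_g2 {A B : ℝ} (hA : 3 ≤ A) (hAB : A ≤ B) :
    ∫ t in A..B, 1 / t = Real.log B - Real.log A := by
  apply intervalIntegral.integral_eq_sub_of_hasDerivAt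
  · intro s hs
    rw [Set.uIcc_of_le hAB] at hs
    have hs0 : (0:ℝ) < s := by linarith [hs.1]
    have h1 : HasDerivAt Real.log s⁻¹ s := Real.hasDerivAt_log (ne_of_gt hs0)
    refine h1.congr_deriv ?_
    rw [one_div]
  · apply ContinuousOn.intervalIntegrable
    rw [Set.uIcc_of_le hAB]
    apply ContinuousOn.div continuousOn_const continuousOn_id
    intro s hs
    exact ne_of_gt (show (0:ℝ) < id s by simp only [id_eq]; linarith [hs.1])

lemma integral_g3 {A B : ℝ} (hA : 3 ≤ A) (hAB : A ≤ B) :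
    ∫ t in A..B, 1 / (t * Real.log t)
      = Real.log (Real.log B) - Real.log (Real.log A) := by
  apply intervalIntegral.integral_eq_sub_of_hasDerivAt
  · intro s hs
    rw [Set.uIcc_of_le hAB] at hs
    have hs0 : (0:ℝ) < s := by linarith [hs.1]
    have hls : (0:ℝ) < Real.log s := Real.log_pos (by linarith [hs.1])
    have h1 : HasDerivAt Real.log s⁻¹ s := Real.hasDerivAt_log (ne_of_gt hs0)
    have h2 : HasDerivAt (fun u => Real.log (Real.log u)) ((Real.log s)⁻¹ * s⁻¹) s :=
      (Real.hasDerivAt_log (ne_of_gt hls)).comp s h1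
    refine h2.congr_deriv ?_
    field_simp
  · apply ContinuousOn.intervalIntegrable
    rw [Set.uIcc_of_le hAB]
    apply ContinuousOn.div continuousOn_const
    · exact ContinuousOn.mul continuousOn_id
        (Real.continuousOn_log.mono fun s hs => ne_of_gt (by linarith [hs.1] : (0:ℝ) < s))
    · intro s hs
      have hs0 : (0:ℝ) < s := by linarith [hs.1]
      have : (0:ℝ) < Real.log s := Real.log_pos (by linarith [hs.1])
      positivity

lemma integral_g4 {A B : ℝ} (hA : 3 ≤ A) (hAB : A ≤ B) :
    ∫ t in A..B, 1 / (t * Real.log t ^ 2)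
      = 1 / Real.log A - 1 / Real.log B := by
  have key : ∫ t in A..B, 1 / (t * Real.log t ^ 2)
      = (-(Real.log B)⁻¹) - (-(Real.log A)⁻¹) := by
    apply intervalIntegral.integral_eq_sub_of_hasDerivAt
    · intro s hs
      rw [Set.uIcc_of_le hAB] at hs
      have hs0 : (0:ℝ) < s := by linarith [hs.1]
      have hls : (0:ℝ) < Real.log s := Real.log_pos (by linarith [hs.1])
      have h1 : HasDerivAt Real.log s⁻¹ s := Real.hasDerivAt_log (ne_of_gt hs0)
      have h2 : HasDerivAt (fun u => -(Real.log u)⁻¹) (s⁻¹ / Real.log s ^ 2) s := by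
        have h3 := (h1.inv (ne_of_gt hls)).neg
        refine h3.congr_deriv ?_
        ring
      refine h2.congr_deriv ?_
      ring
    · apply ContinuousOn.intervalIntegrable
      rw [Set.uIcc_of_le hAB]
      apply ContinuousOn.div continuousOn_const
      · exact ContinuousOn.mul continuousOn_id
          ((Real.continuousOn_log.mono fun s hs =>
            ne_of_gt (by linarith [hs.1] : (0:ℝ) < s)).pow 2)
      · intro s hs
        have hs0 : (0:ℝ) < s := by linarith [hs.1]
        have : (0:ℝ) < Real.log s := Real.log_pos (by linarith [hs.1])
        positivity
  rw [key]; ring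

lemma sum_sub_integral_bound {g : ℝ → ℝ} {N₀ N : ℕ} (h : N₀ ≤ N)
    (hg : AntitoneOn g (Set.Icc (N₀:ℝ) (N:ℝ)))
    (hnnN : 0 ≤ g N) :
    |(∑ n ∈ Finset.Icc N₀ N, g n) - ∫ x in (N₀:ℝ)..(N:ℝ), g x| ≤ g N₀ := by
  have hup : ∫ x in (N₀:ℝ)..(N:ℝ), g x ≤ ∑ x ∈ Finset.Ico N₀ N, g x :=
    hg.integral_le_sum_Ico h
  have hlo : (∑ i ∈ Finset.Ico N₀ N, g (i + 1 : ℕ)) ≤ ∫ x in (N₀:ℝ)..(N:ℝ), g x :=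
    hg.sum_le_integral_Ico h
  have e1 : (∑ x ∈ Finset.Ico N₀ N, g x) + g N = ∑ n ∈ Finset.Icc N₀ N, g n :=
    Finset.sum_Ico_add_eq_sum_Icc (f := fun i : ℕ => g i) h
  have e2 : g (N₀ : ℕ) + (∑ i ∈ Finset.Ioc N₀ N, g i) = ∑ n ∈ Finset.Icc N₀ N, g n :=
    Finset.add_sum_Ioc_eq_sum_Icc (f := fun i : ℕ => g i) h
  have e3 : (∑ i ∈ Finset.Ico N₀ N, g (i + 1 : ℕ)) = ∑ i ∈ Finset.Ioc N₀ N, g i := by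
    have := Finset.sum_Ico_add' (fun i : ℕ => g i) N₀ N 1
    rw [this]
    congr 1
    rw [Finset.Ico_add_one_add_one_eq_Ioc]
  rw [abs_le]
  constructor
  · linarith
  · linarith

lemma exp_one_lt_three : Real.exp 1 < 3 :=
  lt_trans Real.exp_one_lt_d9 (by norm_num)

lemma anti_g1 {A B : ℝ} (hA : 3 ≤ A) :
    AntitoneOn (fun t : ℝ => Real.log t / t) (Set.Icc A B) := by
  apply Real.log_div_self_antitoneOn.mono
  intro x hx
  simp only [Set.mem_Ici]
  have := hx.1
  linarith [_root_.exp_one_lt_three]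

lemma anti_g2 {A B : ℝ} (hA : 3 ≤ A) :
    AntitoneOn (fun t : ℝ => 1 / t) (Set.Icc A B) := by
  intro x hx y hy hxy
  exact one_div_le_one_div_of_le (by linarith [hx.1]) hxy

lemma anti_g3 {A B : ℝ} (hA : 3 ≤ A) :
    AntitoneOn (fun t : ℝ => 1 / (t * Real.log t)) (Set.Icc A B) := by
  intro x hx y hy hxy
  have hx0 : (0:ℝ) < x := by linarith [hx.1]
  have hlx : (0:ℝ) < Real.log x := Real.log_pos (by linarith [hx.1])
  apply one_div_le_one_div_of_le (by positivity)
  exact mul_le_mul hxy (Real.log_le_log hx0 hxy) hlx.le (by linarith)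

lemma anti_g4 {A B : ℝ} (hA : 3 ≤ A) :
    AntitoneOn (fun t : ℝ => 1 / (t * Real.log t ^ 2)) (Set.Icc A B) := by
  intro x hx y hy hxy
  have hx0 : (0:ℝ) < x := by linarith [hx.1]
  have hlx : (0:ℝ) < Real.log x := Real.log_pos (by linarith [hx.1])
  apply one_div_le_one_div_of_le (by positivity)
  apply mul_le_mul hxy (pow_le_pow_left₀ hlx.le (Real.log_le_log hx0 hxy) 2)
    (by positivity) (by linarith)

lemma sum_aa_est {N₀ N : ℕ} (h3 : 3 ≤ N₀) (hN : N₀ ≤ N) :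
    |(∑ n ∈ Finset.Icc N₀ N, aa n) - (F N - F N₀)| ≤
      Real.log N₀ / N₀ + 1 / (N₀:ℝ) + 1 / (N₀ * Real.log N₀) := by
  have h3r : (3:ℝ) ≤ (N₀:ℝ) := by exact_mod_cast h3
  have hNr : ((N₀:ℕ):ℝ) ≤ (N:ℝ) := by exact_mod_cast hN
  have hN0 : (0:ℝ) < (N:ℝ) := by linarith
  have hlogN : (0:ℝ) ≤ Real.log N := Real.log_nonneg (by linarith)
  have hb1 := sum_sub_integral_bound hN (anti_g1 h3r) (by positivity)
  have hb2 := sum_sub_integral_bound hN (anti_g2 h3r) (by positivity)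
  have hb3 : |(∑ n ∈ Finset.Icc N₀ N, 1 / ((n:ℝ) * Real.log n))
      - ∫ x in (N₀:ℝ)..(N:ℝ), 1 / (x * Real.log x)| ≤ 1 / ((N₀:ℝ) * Real.log N₀) := by
    apply sum_sub_integral_bound hN (anti_g3 h3r)
    have : (0:ℝ) < Real.log N := Real.log_pos (by linarith)
    positivity
  rw [integral_g1 h3r hNr] at hb1
  rw [integral_g2 h3r hNr] at hb2
  rw [integral_g3 h3r hNr] at hb3
  have hsum : (∑ n ∈ Finset.Icc N₀ N, aa n)
      = (∑ n ∈ Finset.Icc N₀ N, Real.log n / (n:ℝ))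
        - (∑ n ∈ Finset.Icc N₀ N, 1 / (n:ℝ))
        - (∑ n ∈ Finset.Icc N₀ N, 1 / ((n:ℝ) * Real.log n)) := by
    rw [← Finset.sum_sub_distrib, ← Finset.sum_sub_distrib]
    simp only [aa]
  have hF : F N - F N₀
      = (Real.log N ^ 2 / 2 - Real.log N₀ ^ 2 / 2)
        - (Real.log N - Real.log N₀)
        - (Real.log (Real.log N) - Real.log (Real.log N₀)) := by
    simp only [F]; ring
  rw [hsum, hF]
  have e1 := abs_le.1 hb1
  have e2 := abs_le.1 hb2
  have e3 := abs_le.1 hb3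
  rw [abs_le]
  constructor <;> · push_cast at *; linarith

lemma sum_g4_est {N₀ N : ℕ} (h3 : 3 ≤ N₀) (hN : N₀ ≤ N) :
    (∑ n ∈ Finset.Icc N₀ N, 1 / ((n:ℝ) * Real.log n ^ 2))
      ≤ 1 / ((N₀:ℝ) * Real.log N₀ ^ 2) + 1 / Real.log N₀ := by
  have h3r : (3:ℝ) ≤ (N₀:ℝ) := by exact_mod_cast h3
  have hNr : ((N₀:ℕ):ℝ) ≤ (N:ℝ) := by exact_mod_cast hN
  have hlogN : (0:ℝ) < Real.log N := Real.log_pos (by linarith)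
  have hb4 : |(∑ n ∈ Finset.Icc N₀ N, 1 / ((n:ℝ) * Real.log n ^ 2))
      - ∫ x in (N₀:ℝ)..(N:ℝ), 1 / (x * Real.log x ^ 2)|
        ≤ 1 / ((N₀:ℝ) * Real.log N₀ ^ 2) := by
    apply sum_sub_integral_bound hN (anti_g4 h3r)
    positivity
  rw [integral_g4 h3r hNr] at hb4
  have e4 := abs_le.1 hb4
  have : (0:ℝ) < 1 / Real.log N := by positivity
  linarith [e4.2]

lemma log_three_gt_one : (1:ℝ) < Real.log 3 := by
  have h := Real.exp_one_lt_d9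
  have : Real.exp 1 < 3 := lt_trans h (by norm_num)
  calc (1:ℝ) = Real.log (Real.exp 1) := by rw [Real.log_exp]
    _ < Real.log 3 := Real.log_lt_log (Real.exp_pos 1) this

lemma F_incr {x : ℝ} {N : ℕ} (h3 : 3 ≤ N) (h1 : (N:ℝ) ≤ x) (h2 : x ≤ N + 1) :
    |F x - F N| ≤ 4 := by
  have h3r : (3:ℝ) ≤ (N:ℝ) := by exact_mod_cast h3
  have hN0 : (0:ℝ) < N := by linarith
  have hx0 : (0:ℝ) < x := by linarith
  set u := Real.log N with hu
  set w := Real.log x with hw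
  have hu1 : (1:ℝ) < u := lt_of_lt_of_le log_three_gt_one (Real.log_le_log (by norm_num) h3r)
  have huw : u ≤ w := Real.log_le_log hN0 h1
  have hwup : w - u ≤ 1 / N := by
    have hdiv : w - u = Real.log (x / N) := (Real.log_div (ne_of_gt hx0) (ne_of_gt hN0)).symm
    rw [hdiv]
    have := Real.log_le_sub_one_of_pos (show (0:ℝ) < x / N by positivity)
    have hxn : x / N - 1 ≤ 1 / N := by
      rw [div_sub_one (ne_of_gt hN0), div_le_div_iff₀ hN0 hN0]
      nlinarith
    linarith
  have h1N : 1 / (N:ℝ) ≤ 1 / 3 := by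
    rw [div_le_div_iff₀ hN0 (by norm_num)]; linarith
  have huN : u ≤ N := by
    have := Real.log_le_sub_one_of_pos hN0
    linarith
  have hA : w ^ 2 / 2 - u ^ 2 / 2 ≤ 2 := by
    have e : w ^ 2 / 2 - u ^ 2 / 2 = (w - u) * (w + u) / 2 := by ring
    rw [e]
    have hwu1 : w ≤ u + 1 / 3 := by linarith
    have : (w - u) * (w + u) ≤ (1 / N) * (2 * u + 1 / 3) := by
      apply mul_le_mul hwup (by linarith) (by linarith) (by positivity)
    have huNd : (1 / N) * u ≤ 1 := by
      rw [div_mul_eq_mul_div, one_mul, div_le_one hN0]; linarith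
    nlinarith
  have hA0 : 0 ≤ w ^ 2 / 2 - u ^ 2 / 2 := by nlinarith
  have hB0 : 0 ≤ w - u := by linarith
  have hB1 : w - u ≤ 1 := by linarith
  have hC0 : 0 ≤ Real.log w - Real.log u := by
    have := Real.log_le_log (by linarith : (0:ℝ) < u) huw
    linarith
  have hC1 : Real.log w - Real.log u ≤ 1 := by
    have hdiv : Real.log w - Real.log u = Real.log (w / u) :=
      (Real.log_div (by linarith) (by linarith)).symm
    rw [hdiv]
    have := Real.log_le_sub_one_of_pos (show (0:ℝ) < w / u from div_pos (by linarith) (by linarith))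
    have : w / u - 1 ≤ 1 := by
      rw [div_sub_one (by linarith : u ≠ 0), div_le_one (by linarith)]
      have : 1 / (N:ℝ) ≤ u := by linarith
      linarith
    linarith
  have hFx : F x - F N = (w ^ 2 / 2 - u ^ 2 / 2) - (w - u) - (Real.log w - Real.log u) := by
    simp only [F, ← hu, ← hw]; ring
  rw [hFx, abs_le]
  constructor <;> linarith

theorem panaitopol (C : ℝ) (hC : 0 < C)
    (hR : (fun x : ℝ => primePi x - li x)
      =O[atTop] (fun x : ℝ => x * Real.exp (-C * pntDelta x))) :
    (fun x : ℝ => (∑ n ∈ Finset.Icc 2 ⌊x⌋₊, 1 / (Nat.primeCounting n : ℝ)) -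
        ((1 / 2) * (Real.log x) ^ 2 - Real.log x - Real.log (Real.log x)))
      =O[atTop] (fun _ : ℝ => (1 : ℝ)) := by
  have hpi : (fun t => primePi t - (t / Real.log t + t / Real.log t ^ 2 + 2 * t / Real.log t ^ 3))
      =O[atTop] fun t => t / Real.log t ^ 4 := by
    have h1 : (fun t : ℝ => primePi t - li t) =O[atTop] fun t => t / Real.log t ^ 4 :=
      hR.trans (exp_bound C hC)
    have h2 := h1.add li_asymp
    apply h2.congr_left
    intro t
    ring
  obtain ⟨K, hK0, hkey⟩ := key_lemma hpi
  obtain ⟨T, hT⟩ := eventually_atTop.1 hkey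
  obtain ⟨N₀, hN₀3, hN₀T⟩ : ∃ n : ℕ, 3 ≤ n ∧ T ≤ (n:ℝ) := by
    refine ⟨⌈T⌉₊ + 3, by omega, ?_⟩
    have := Nat.le_ceil T
    push_cast
    linarith
  have h3r : (3:ℝ) ≤ (N₀:ℝ) := by exact_mod_cast hN₀3
  have hlogN₀ : (0:ℝ) < Real.log N₀ := Real.log_pos (by linarith)
  set c₁ : ℝ := ∑ n ∈ Finset.Ioc 1 (N₀ - 1), 1 / (Nat.primeCounting n : ℝ) with hc₁
  set B4 : ℝ := 1 / ((N₀:ℝ) * Real.log N₀ ^ 2) + 1 / Real.log N₀ with hB4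
  set Baa : ℝ := Real.log N₀ / N₀ + 1 / (N₀:ℝ) + 1 / (N₀ * Real.log N₀) with hBaa
  apply IsBigO.of_bound (|c₁| + |F N₀| + K * B4 + Baa + 4)
  filter_upwards [eventually_ge_atTop ((N₀:ℝ) + 1)] with x hx
  have hx0 : (0:ℝ) < x := by linarith
  set N : ℕ := ⌊x⌋₊ with hNdef
  have hNx : (N:ℝ) ≤ x := Nat.floor_le hx0.le
  have hxN1 : x < N + 1 := Nat.lt_floor_add_one x
  have hN₀N : N₀ ≤ N := Nat.le_floor (by push_cast; linarith)
  have h3N : 3 ≤ N := le_trans hN₀3 hN₀N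
  have hsplit : (∑ n ∈ Finset.Icc 2 N, 1 / (Nat.primeCounting n : ℝ))
      = c₁ + ∑ n ∈ Finset.Icc N₀ N, 1 / (Nat.primeCounting n : ℝ) := by
    have h1 : Finset.Icc 2 N = Finset.Ioc 1 N := by
      rw [← Finset.Icc_add_one_left_eq_Ioc]; rfl
    have h2 : Finset.Icc N₀ N = Finset.Ioc (N₀ - 1) N := by
      have h2' := Finset.Icc_add_one_left_eq_Ioc (N₀ - 1) N
      rw [show N₀ - 1 + 1 = N₀ from by omega] at h2'
      exact h2'
    rw [h1, h2, hc₁]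
    rw [← Finset.sum_Ioc_consecutive _ (by omega : 1 ≤ N₀ - 1) (by omega : N₀ - 1 ≤ N)]
  have herr : |∑ n ∈ Finset.Icc N₀ N, (1 / (Nat.primeCounting n : ℝ) - aa n)| ≤ K * B4 := by
    calc |∑ n ∈ Finset.Icc N₀ N, (1 / (Nat.primeCounting n : ℝ) - aa n)|
        ≤ ∑ n ∈ Finset.Icc N₀ N, |1 / (Nat.primeCounting n : ℝ) - aa n| :=
          Finset.abs_sum_le_sum_abs _ _
      _ ≤ ∑ n ∈ Finset.Icc N₀ N, K * (1 / ((n:ℝ) * Real.log n ^ 2)) := by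
          apply Finset.sum_le_sum
          intro n hn
          have hn₀ : N₀ ≤ n := (Finset.mem_Icc.1 hn).1
          have hnT : T ≤ (n:ℝ) := le_trans hN₀T (by exact_mod_cast hn₀)
          have hb := hT (n:ℝ) hnT
          have hpp : primePi (n:ℝ) = (Nat.primeCounting n : ℝ) := by
            rw [primePi, Nat.floor_natCast]
          rw [hpp] at hb
          calc |1 / (Nat.primeCounting n : ℝ) - aa n| ≤ K / ((n:ℝ) * Real.log n ^ 2) := hb
            _ = K * (1 / ((n:ℝ) * Real.log n ^ 2)) := by ring
      _ = K * ∑ n ∈ Finset.Icc N₀ N, 1 / ((n:ℝ) * Real.log n ^ 2) := by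
          rw [Finset.mul_sum]
      _ ≤ K * B4 := mul_le_mul_of_nonneg_left (sum_g4_est hN₀3 hN₀N) hK0.le
  have haaest := sum_aa_est hN₀3 hN₀N
  have hFx : |F x - F N| ≤ 4 := F_incr h3N hNx (by linarith)
  have hsum_split : (∑ n ∈ Finset.Icc N₀ N, 1 / (Nat.primeCounting n : ℝ))
      = (∑ n ∈ Finset.Icc N₀ N, (1 / (Nat.primeCounting n : ℝ) - aa n))
        + ∑ n ∈ Finset.Icc N₀ N, aa n := by
    rw [← Finset.sum_add_distrib]
    congr 1; funext n; ring
  have target_eq : (1 / 2) * (Real.log x) ^ 2 - Real.log x - Real.log (Real.log x) = F x := by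
    simp only [F]; ring
  rw [Real.norm_eq_abs, Real.norm_eq_abs, target_eq, hsplit, hsum_split]
  have e1 := abs_le.1 herr
  have e2 := abs_le.1 haaest
  have e3 := abs_le.1 hFx
  have hc₁b := le_abs_self c₁
  have hc₁b' := neg_abs_le c₁
  have hFN₀ := le_abs_self (F N₀)
  have hFN₀' := neg_abs_le (F N₀)
  rw [abs_le]
  rw [abs_one, mul_one]
  constructor <;> linarith

end
end

section
/- Assume π(x) = li(x) + O(x·exp(−C·δ(x))) with δ(x) = (log x)^{3/5}·(log log x)^{−1/5}, C > 0. Then there exist constants B ∈ ℝ and D > 0 such that ∑_{2 ≤ n ≤ x} 1/π(n) = log x · log(li(x)) − ∫_3^x log(li(t))/t dt + B + O(exp(−D·δ(x))) as x → ∞. -/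
open Filter Real

lemma li_integrand_cont {s : Set ℝ} (hs : ∀ t ∈ s, 2 ≤ t) :
    ContinuousOn (fun t : ℝ => 1 / Real.log t) s := by
  intro t ht
  have h2 : (2:ℝ) ≤ t := hs t ht
  have hlog : Real.log t ≠ 0 := by
    have : (0:ℝ) < Real.log t := Real.log_pos (by linarith)
    linarith
  exact (ContinuousAt.continuousWithinAt (by
    exact continuousAt_const.div (Real.continuousAt_log (by linarith)) hlog))

lemma li_integrable {a b : ℝ} (ha : 2 ≤ a) (hb : 2 ≤ b) :
    IntervalIntegrable (fun t : ℝ => 1 / Real.log t) MeasureTheory.volume a b := by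
  apply (li_integrand_cont ?_).intervalIntegrable
  intro t ht
  rcases Set.mem_uIcc.mp ht with h | h
  · linarith [h.1]
  · linarith [h.1]

lemma li_sub (x y : ℝ) (hx : 2 ≤ x) (hy : 2 ≤ y) :
    li y - li x = ∫ t in x..y, 1 / Real.log t := by
  unfold li
  rw [← intervalIntegral.integral_interval_sub_left (li_integrable le_rfl hy)
      (li_integrable le_rfl hx)]

lemma li_mono {x y : ℝ} (hx : 2 ≤ x) (hxy : x ≤ y) : li x ≤ li y := by
  have h := li_sub x y hx (by linarith)
  have hnn : 0 ≤ ∫ t in x..y, 1 / Real.log t := by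
    apply intervalIntegral.integral_nonneg hxy
    intro u hu
    have : 0 < Real.log u := Real.log_pos (by linarith [hu.1])
    positivity
  linarith

lemma li_pos {x : ℝ} (hx : 3 ≤ x) : 0 < li x := by
  have := li_lower hx
  have hlogx : 0 < Real.log x := Real.log_pos (by linarith)
  have h2 : (0:ℝ) < (x - 2) / Real.log x := by
    apply div_pos <;> linarith
  linarith

lemma li_upper {x : ℝ} (hx : 2 ≤ x) : li x ≤ (x - 2) / Real.log 2 := by
  have hlog2 : 0 < Real.log 2 := Real.log_pos (by norm_num)
  have : ∫ t in (2:ℝ)..x, 1 / Real.log t ≤ ∫ t in (2:ℝ)..x, (Real.log 2)⁻¹ := by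
    apply intervalIntegral.integral_mono_on hx (li_integrable le_rfl hx)
      (by simp [intervalIntegrable_const])
    intro t ht
    rw [one_div]
    apply inv_anti₀ hlog2
    exact Real.log_le_log (by norm_num) ht.1
  unfold li
  simpa [div_eq_mul_inv, mul_comm] using this

lemma li_hasDerivAt {x : ℝ} (hx : 2 < x) : HasDerivAt li (1 / Real.log x) x := by
  unfold li
  apply intervalIntegral.integral_hasDerivAt_right (li_integrable le_rfl hx.le)
  · apply ContinuousAt.stronglyMeasurableAtFilter (s := Set.Ioi 2) isOpen_Ioi
    intro t ht
    simp only [Set.mem_Ioi] at ht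
    have hlog : Real.log t ≠ 0 := ne_of_gt (Real.log_pos (by linarith))
    exact continuousAt_const.div (Real.continuousAt_log (by linarith)) hlog
    exact hx
  · have hlog : Real.log x ≠ 0 := ne_of_gt (Real.log_pos (by linarith))
    exact continuousAt_const.div (Real.continuousAt_log (by linarith)) hlog

lemma exp_three_lt : Real.exp 3 < 21 := by
  have h := Real.exp_one_lt_d9
  have h0 := Real.exp_pos 1
  calc Real.exp 3 = Real.exp 1 * Real.exp 1 * Real.exp 1 := by
        rw [← Real.exp_add, ← Real.exp_add]; norm_num
    _ < 21 := by nlinarith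

lemma log_ge_three {x : ℝ} (hx : 21 ≤ x) : 3 ≤ Real.log x := by
  have h := Real.log_le_log (Real.exp_pos 3) (le_trans exp_three_lt.le hx)
  rwa [Real.log_exp] at h

lemma log_pos_of_21 {x : ℝ} (hx : 21 ≤ x) : 0 < Real.log x := by
  linarith [log_ge_three hx]

lemma loglog_ge_one {x : ℝ} (hx : 21 ≤ x) : 1 ≤ Real.log (Real.log x) := by
  have h3 : 3 ≤ Real.log x := log_ge_three hx
  have := Real.log_le_log (Real.exp_pos 1) (by
    have := Real.exp_one_lt_d9; linarith : Real.exp 1 ≤ Real.log x)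
  rwa [Real.log_exp] at this

lemma delta_pos {x : ℝ} (hx : 21 ≤ x) : 0 < pntDelta x := by
  have h1 : 0 < Real.log x := log_pos_of_21 hx
  have h2 : (0:ℝ) < Real.log (Real.log x) := by linarith [loglog_ge_one hx]
  exact mul_pos (Real.rpow_pos_of_pos h1 _) (Real.rpow_pos_of_pos h2 _)

lemma delta_eq_pow5 {x : ℝ} (hx : 21 ≤ x) :
    pntDelta x ^ 5 = (Real.log x) ^ 3 / Real.log (Real.log x) := by
  have h1 : (0:ℝ) ≤ Real.log x := (log_pos_of_21 hx).le
  have h2 : (0:ℝ) ≤ Real.log (Real.log x) := by linarith [loglog_ge_one hx]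
  unfold pntDelta
  rw [mul_pow, ← Real.rpow_natCast ((Real.log x) ^ ((3:ℝ)/5)) 5,
      ← Real.rpow_natCast ((Real.log (Real.log x)) ^ (-(1:ℝ)/5)) 5,
      ← Real.rpow_mul h1, ← Real.rpow_mul h2]
  norm_num
  rw [Real.rpow_neg_one, ← Real.rpow_natCast (Real.log x) 3]
  norm_num [div_eq_mul_inv]

lemma cube_div_log_mono {u v : ℝ} (hu : 3 ≤ u) (huv : u ≤ v) :
    u ^ 3 / Real.log u ≤ v ^ 3 / Real.log v := by
  have hu0 : (0:ℝ) < u := by linarith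
  have hv0 : (0:ℝ) < v := by linarith
  have hlu : 1 ≤ Real.log u := by
    have := Real.log_le_log (by positivity : (0:ℝ) < Real.exp 1)
      (by have := Real.exp_one_lt_d9; linarith : Real.exp 1 ≤ u)
    rwa [Real.log_exp] at this
  have hlv0 : 0 < Real.log v := by
    have := Real.log_le_log hu0 huv
    linarith
  rw [div_le_div_iff₀ (by linarith) hlv0]
  have hkey : Real.log v ≤ Real.log u * (v / u) := by
    have hvu : v = u * (v / u) := by field_simp
    have h1 : Real.log v = Real.log u + Real.log (v / u) := by
      rw [hvu, Real.log_mul (ne_of_gt hu0) (by positivity)]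
      congr 1
      rw [← hvu]
    have h2 : Real.log (v / u) ≤ v / u - 1 :=
      Real.log_le_sub_one_of_pos (by positivity)
    have h3 : 0 ≤ v / u - 1 := by
      rw [le_sub_iff_add_le, zero_add, le_div_iff₀ hu0, one_mul]; exact huv
    nlinarith
  have hvu0 : 0 < v / u := by positivity
  have h4 : u ^ 3 * (Real.log u * (v / u)) = u ^ 2 * v * Real.log u := by
    field_simp
  have h5 : u ^ 2 * v * Real.log u ≤ v ^ 3 * Real.log u := by
    have hsq : u ^ 2 ≤ v ^ 2 := by nlinarith
    have : u ^ 2 * v ≤ v ^ 3 := by nlinarith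
    nlinarith
  have h6 : u ^ 3 * Real.log v ≤ u ^ 3 * (Real.log u * (v / u)) := by
    apply mul_le_mul_of_nonneg_left hkey (by positivity)
  linarith

lemma delta_mono {x y : ℝ} (hx : 21 ≤ x) (hxy : x ≤ y) : pntDelta x ≤ pntDelta y := by
  have h5 : pntDelta x ^ 5 ≤ pntDelta y ^ 5 := by
    rw [delta_eq_pow5 hx, delta_eq_pow5 (by linarith)]
    exact cube_div_log_mono (log_ge_three hx)
      (Real.log_le_log (by linarith) hxy)
  have h1 := (delta_pos hx).le
  have h2 := (delta_pos (show (21:ℝ) ≤ y by linarith)).le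
  exact le_of_pow_le_pow_left₀ (by norm_num) h2 h5

lemma delta_le_log {x : ℝ} (hx : 21 ≤ x) : pntDelta x ≤ Real.log x := by
  have h1 : 1 ≤ Real.log x := by linarith [log_ge_three hx]
  have h2 : 1 ≤ Real.log (Real.log x) := loglog_ge_one hx
  have ha : (Real.log x) ^ ((3:ℝ)/5) ≤ Real.log x := by
    nth_rewrite 2 [← Real.rpow_one (Real.log x)]
    exact Real.rpow_le_rpow_of_exponent_le h1 (by norm_num)
  have hb : (Real.log (Real.log x)) ^ (-(1:ℝ)/5) ≤ 1 :=
    Real.rpow_le_one_of_one_le_of_nonpos h2 (by norm_num)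
  have hc : (0:ℝ) ≤ (Real.log x) ^ ((3:ℝ)/5) := Real.rpow_nonneg (by linarith) _
  calc pntDelta x ≤ (Real.log x) ^ ((3:ℝ)/5) * 1 :=
        mul_le_mul_of_nonneg_left hb hc
    _ ≤ Real.log x := by rw [mul_one]; exact ha

lemma delta_ge_sqrt {x : ℝ} (hx : 256 ≤ Real.log x) : Real.sqrt (Real.log x) ≤ pntDelta x := by
  set u := Real.log x with hu
  have hu0 : (0:ℝ) < u := by linarith
  have hlu : Real.log u ≤ u ^ ((1:ℝ)/2) := by
    have h1 : Real.log u ≤ u ^ ((1:ℝ)/4) / (1/4) := Real.log_le_rpow_div hu0.le (by norm_num)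
    have h2 : (4:ℝ) ≤ u ^ ((1:ℝ)/4) := by
      have := Real.rpow_le_rpow (by norm_num : (0:ℝ) ≤ 256) hx (by norm_num : (0:ℝ) ≤ 1/4)
      calc (4:ℝ) = (256:ℝ) ^ ((1:ℝ)/4) := by
            rw [show (256:ℝ) = 4 ^ (4:ℕ) by norm_num, ← Real.rpow_natCast 4 4,
              ← Real.rpow_mul (by norm_num)]
            norm_num
        _ ≤ u ^ ((1:ℝ)/4) := this
    have h3 : u ^ ((1:ℝ)/2) = u ^ ((1:ℝ)/4) * u ^ ((1:ℝ)/4) := by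
      rw [← Real.rpow_add hu0]; norm_num
    have h4 : (0:ℝ) ≤ u ^ ((1:ℝ)/4) := Real.rpow_nonneg hu0.le _
    calc Real.log u ≤ u ^ ((1:ℝ)/4) / (1/4) := h1
      _ = 4 * u ^ ((1:ℝ)/4) := by ring
      _ ≤ u ^ ((1:ℝ)/4) * u ^ ((1:ℝ)/4) := by nlinarith
      _ = u ^ ((1:ℝ)/2) := h3.symm
  have hlu0 : 0 < Real.log u := by
    have : (1:ℝ) < u := by linarith
    exact Real.log_pos this
  have hstep : (u ^ ((1:ℝ)/2)) ^ (-(1:ℝ)/5) ≤ (Real.log u) ^ (-(1:ℝ)/5) := by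
    rw [show (-(1:ℝ)/5) = -((1:ℝ)/5) by norm_num, Real.rpow_neg (Real.rpow_nonneg hu0.le _),
      Real.rpow_neg hlu0.le]
    apply inv_anti₀ (Real.rpow_pos_of_pos hlu0 _)
    exact Real.rpow_le_rpow hlu0.le hlu (by norm_num)
  have hfinal : u ^ ((3:ℝ)/5) * (u ^ ((1:ℝ)/2)) ^ (-(1:ℝ)/5) = u ^ ((1:ℝ)/2) := by
    rw [← Real.rpow_mul hu0.le, ← Real.rpow_add hu0]
    norm_num
  calc Real.sqrt u = u ^ ((1:ℝ)/2) := Real.sqrt_eq_rpow u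
    _ = u ^ ((3:ℝ)/5) * (u ^ ((1:ℝ)/2)) ^ (-(1:ℝ)/5) := hfinal.symm
    _ ≤ u ^ ((3:ℝ)/5) * (Real.log u) ^ (-(1:ℝ)/5) :=
        mul_le_mul_of_nonneg_left hstep (Real.rpow_nonneg hu0.le _)
    _ = pntDelta x := rfl

lemma tendsto_sqrt_atTop : Tendsto Real.sqrt atTop atTop := by
  rw [tendsto_atTop_atTop]
  intro b
  refine ⟨b ^ 2, fun a ha => ?_⟩
  calc b ≤ |b| := le_abs_self b
    _ = Real.sqrt (b ^ 2) := (Real.sqrt_sq_eq_abs b).symm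
    _ ≤ Real.sqrt a := Real.sqrt_le_sqrt ha

lemma tendsto_pow_mul_exp_neg_sqrt (k : ℕ) {c : ℝ} (hc : 0 < c) :
    Tendsto (fun u : ℝ => u ^ k * Real.exp (-c * Real.sqrt u)) atTop (nhds 0) := by
  have h1 : Tendsto (fun s : ℝ => (c * s) ^ (2 * k) * Real.exp (-(c * s))) atTop (nhds 0) :=
    (tendsto_pow_mul_exp_neg_atTop_nhds_zero (2 * k)).comp
      (Tendsto.const_mul_atTop hc tendsto_id)
  have h2 : Tendsto (fun s : ℝ => s ^ (2 * k) * Real.exp (-c * s)) atTop (nhds 0) := by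
    have := h1.const_mul ((c ^ (2*k))⁻¹)
    rw [mul_zero] at this
    apply this.congr'
    filter_upwards [eventually_ge_atTop (0:ℝ)] with s _
    rw [mul_pow]
    field_simp
  have h3 := h2.comp _root_.tendsto_sqrt_atTop
  apply h3.congr'
  filter_upwards [eventually_ge_atTop (0:ℝ)] with u hu
  simp only [Function.comp_apply]
  rw [pow_mul, Real.sq_sqrt hu]

lemma tendsto_logpow_mul_exp_delta (k : ℕ) {c : ℝ} (hc : 0 < c) :
    Tendsto (fun x : ℝ => (Real.log x) ^ k * Real.exp (-c * pntDelta x)) atTop (nhds 0) := by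
  apply squeeze_zero' (g := fun x : ℝ => (Real.log x) ^ k * Real.exp (-c * Real.sqrt (Real.log x)))
  · filter_upwards [eventually_ge_atTop (1:ℝ)] with x hx
    have : 0 ≤ Real.log x := Real.log_nonneg hx
    positivity
  · filter_upwards [Real.tendsto_log_atTop.eventually_ge_atTop (256:ℝ)] with x hx
    have h1 : Real.sqrt (Real.log x) ≤ pntDelta x := delta_ge_sqrt hx
    have h2 : Real.exp (-c * pntDelta x) ≤ Real.exp (-c * Real.sqrt (Real.log x)) := by
      apply Real.exp_le_exp.mpr
      nlinarith
    have h3 : (0:ℝ) ≤ (Real.log x) ^ k := by positivity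
    exact mul_le_mul_of_nonneg_left h2 h3
  · exact (tendsto_pow_mul_exp_neg_sqrt k hc).comp Real.tendsto_log_atTop

noncomputable def Mf (x : ℝ) : ℝ :=
  Real.log x * Real.log (li x) - ∫ t in (3:ℝ)..x, Real.log (li t) / t

lemma li_continuousAt {x : ℝ} (hx : 2 < x) : ContinuousAt li x :=
  (li_hasDerivAt hx).continuousAt

lemma integrand2_continuousAt {t : ℝ} (ht : 3 ≤ t) : ContinuousAt (fun s => Real.log (li s) / s) t := by
  have h1 : ContinuousAt (fun s => Real.log (li s)) t :=
    ContinuousAt.log (li_continuousAt (by linarith)) (ne_of_gt (li_pos ht))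
  exact h1.div continuousAt_id (by linarith)

lemma integrand2_integrable {b : ℝ} (hb : 3 ≤ b) :
    IntervalIntegrable (fun s => Real.log (li s) / s) MeasureTheory.volume 3 b := by
  apply ContinuousOn.intervalIntegrable
  intro t ht
  rw [Set.uIcc_of_le hb] at ht
  exact (integrand2_continuousAt ht.1).continuousWithinAt

lemma Mf_hasDerivAt {x : ℝ} (hx : 3 < x) : HasDerivAt Mf (li x)⁻¹ x := by
  have hxpos : (0:ℝ) < x := by linarith
  have hlix : 0 < li x := li_pos (by linarith)
  have hlogx : 0 < Real.log x := Real.log_pos (by linarith)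
  have h1 : HasDerivAt li (1 / Real.log x) x := li_hasDerivAt (by linarith)
  have h2 : HasDerivAt (fun y => Real.log (li y)) ((1 / Real.log x) / li x) x :=
    h1.log (ne_of_gt hlix)
  have h3 : HasDerivAt (fun y => Real.log y * Real.log (li y))
      (x⁻¹ * Real.log (li x) + Real.log x * ((1 / Real.log x) / li x)) x :=
    (Real.hasDerivAt_log (ne_of_gt hxpos)).mul h2
  have h4 : HasDerivAt (fun y => ∫ t in (3:ℝ)..y, Real.log (li t) / t)
      (Real.log (li x) / x) x := by
    apply intervalIntegral.integral_hasDerivAt_right (integrand2_integrable hx.le)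
    · apply ContinuousAt.stronglyMeasurableAtFilter (s := Set.Ioi 3) isOpen_Ioi
      · intro t ht
        simp only [Set.mem_Ioi] at ht
        exact integrand2_continuousAt ht.le
      · exact hx
    · exact integrand2_continuousAt hx.le
  have h5 := h3.sub h4
  have : x⁻¹ * Real.log (li x) + Real.log x * ((1 / Real.log x) / li x)
      - Real.log (li x) / x = (li x)⁻¹ := by
    field_simp
    ring
  rw [this] at h5
  exact h5

lemma inv_li_integrable {a b : ℝ} (ha : 3 ≤ a) (hb : 3 ≤ b) :
    IntervalIntegrable (fun t => (li t)⁻¹) MeasureTheory.volume a b := by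
  apply ContinuousOn.intervalIntegrable
  intro t ht
  have h3 : 3 ≤ t := by
    rcases Set.mem_uIcc.mp ht with h | h
    · linarith [h.1]
    · linarith [h.1]
  exact ((li_continuousAt (by linarith)).inv₀ (ne_of_gt (li_pos h3))).continuousWithinAt

lemma Mf_sub {a b : ℝ} (ha : 4 ≤ a) (hab : a ≤ b) :
    Mf b - Mf a = ∫ t in a..b, (li t)⁻¹ := by
  rw [intervalIntegral.integral_eq_sub_of_hasDerivAt (f := Mf) ?_ (inv_li_integrable (by linarith) (by linarith))]
  intro t ht
  rw [Set.uIcc_of_le hab] at ht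
  exact Mf_hasDerivAt (by linarith [ht.1])

lemma invlogsq_hasDerivAt {t : ℝ} (ht : 1 < t) :
    HasDerivAt (fun s => -(Real.log s)⁻¹) ((t * Real.log t ^ 2)⁻¹) t := by
  have hlt : 0 < Real.log t := Real.log_pos ht
  have h1 : HasDerivAt (fun s => (Real.log s)⁻¹) (-(t⁻¹) / (Real.log t)^2) t :=
    (Real.hasDerivAt_log (by linarith)).inv (ne_of_gt hlt)
  have h2 := h1.neg
  have : -(-(t⁻¹) / (Real.log t)^2) = (t * Real.log t ^ 2)⁻¹ := by
    field_simp
  rwa [this] at h2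

lemma invlogsq_integral {a b : ℝ} (ha : 3 ≤ a) (hab : a ≤ b) :
    ∫ t in a..b, (t * Real.log t ^ 2)⁻¹ = (Real.log a)⁻¹ - (Real.log b)⁻¹ := by
  have : ∀ t ∈ Set.uIcc a b, HasDerivAt (fun s => -(Real.log s)⁻¹) ((t * Real.log t ^ 2)⁻¹) t := by
    intro t ht
    rw [Set.uIcc_of_le hab] at ht
    exact invlogsq_hasDerivAt (by linarith [ht.1])
  rw [intervalIntegral.integral_eq_sub_of_hasDerivAt this ?_]
  · ring
  · apply ContinuousOn.intervalIntegrable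
    intro t ht
    rw [Set.uIcc_of_le hab] at ht
    have h3 : 3 ≤ t := le_trans ha ht.1
    have hlt : 0 < Real.log t := Real.log_pos (by linarith)
    have : (0:ℝ) < t * Real.log t ^ 2 := by positivity
    exact (ContinuousAt.continuousWithinAt (ContinuousAt.inv₀
      ((continuousAt_id.mul ((Real.continuousAt_log (by linarith)).pow 2))) (ne_of_gt this)))

lemma delta_sqrt_half {x : ℝ} (hx : 441 ≤ x) : pntDelta x / 2 ≤ pntDelta (Real.sqrt x) := by
  have hsx : 21 ≤ Real.sqrt x := by
    rw [show (21:ℝ) = Real.sqrt 441 by rw [show (441:ℝ) = 21^2 by norm_num, Real.sqrt_sq]; norm_num]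
    exact Real.sqrt_le_sqrt hx
  have hx21 : (21:ℝ) ≤ x := by linarith
  have hlog : Real.log (Real.sqrt x) = Real.log x / 2 := Real.log_sqrt (by linarith)
  have h5x : pntDelta x ^ 5 = (Real.log x)^3 / Real.log (Real.log x) := delta_eq_pow5 hx21
  have h5s : pntDelta (Real.sqrt x) ^ 5
      = (Real.log x / 2)^3 / Real.log (Real.log x / 2) := by
    rw [delta_eq_pow5 hsx, hlog]
  have hll : Real.log (Real.log x / 2) ≤ Real.log (Real.log x) := by
    apply Real.log_le_log (by linarith [log_ge_three hx21])
    linarith [log_ge_three hx21]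
  have hllpos : 0 < Real.log (Real.log x / 2) := by
    apply Real.log_pos
    have := log_ge_three (show (21:ℝ) ≤ Real.sqrt x from hsx)
    rw [hlog] at this
    linarith
  have hkey : pntDelta x ^ 5 / 8 ≤ pntDelta (Real.sqrt x) ^ 5 := by
    rw [h5x, h5s]
    have hnum : ((Real.log x)^3 / Real.log (Real.log x)) / 8
        = ((Real.log x / 2)^3) / Real.log (Real.log x) := by ring
    rw [hnum]
    exact div_le_div_of_nonneg_left
      (pow_nonneg (by linarith [log_ge_three hx21] : (0:ℝ) ≤ Real.log x / 2) 3) hllpos hll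
  have h2 : (pntDelta x / 2) ^ 5 ≤ pntDelta (Real.sqrt x) ^ 5 := by
    have : (pntDelta x / 2) ^ 5 = pntDelta x ^ 5 / 32 := by ring
    have hp := (delta_pos hx21).le
    nlinarith [hkey, pow_nonneg hp 5]
  exact le_of_pow_le_pow_left₀ (by norm_num) (delta_pos hsx).le h2

lemma sum_Ioc_shift (f : ℝ → ℝ) (N M : ℕ) :
    ∑ n ∈ Finset.Ioc N M, f n = ∑ i ∈ Finset.Ico N M, f ((i + 1 : ℕ) : ℝ) := by
  rw [← Finset.Ico_add_one_add_one_eq_Ioc, Finset.sum_Ico_eq_sum_range, Finset.sum_Ico_eq_sum_range]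
  simp only [Nat.add_sub_add_right]
  apply Finset.sum_congr rfl
  intro i _
  congr 1
  push_cast
  ring

lemma invlogsq_antitoneOn {N M : ℝ} (hN : 3 ≤ N) :
    AntitoneOn (fun t : ℝ => (t * Real.log t ^ 2)⁻¹) (Set.Icc N M) := by
  intro a ha b hb hab
  have ha3 : 3 ≤ a := le_trans hN ha.1
  have hb3 : 3 ≤ b := le_trans hN hb.1
  have hla : 0 < Real.log a := Real.log_pos (by linarith)
  have hlb : 0 < Real.log b := Real.log_pos (by linarith)
  have h1 : 0 < a * Real.log a ^ 2 := by positivity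
  apply inv_anti₀ h1
  have hl : Real.log a ≤ Real.log b := Real.log_le_log (by linarith) hab
  calc a * Real.log a ^ 2 ≤ b * Real.log a ^ 2 := by nlinarith
    _ ≤ b * Real.log b ^ 2 := by
        have : Real.log a ^ 2 ≤ Real.log b ^ 2 := by nlinarith
        nlinarith

lemma sum_invlogsq_le {N M : ℕ} (hN : 3 ≤ N) (hNM : N ≤ M) :
    ∑ n ∈ Finset.Ioc N M, (((n:ℝ)) * Real.log n ^ 2)⁻¹ ≤ 1 := by
  have hNr : (3:ℝ) ≤ (N:ℝ) := by exact_mod_cast hN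
  have hNMr : (N:ℝ) ≤ (M:ℝ) := by exact_mod_cast hNM
  have h1 := AntitoneOn.sum_le_integral_Ico hNM (invlogsq_antitoneOn hNr (M := (M:ℝ)))
  rw [← sum_Ioc_shift (fun t => (t * Real.log t ^ 2)⁻¹) N M] at h1
  have h2 := invlogsq_integral hNr hNMr
  have hlogN : 1 ≤ Real.log N := by
    have := Real.log_le_log (Real.exp_pos 1)
      (by have := Real.exp_one_lt_d9; linarith : Real.exp 1 ≤ (N:ℝ))
    rwa [Real.log_exp] at this
  have hlogM : 0 < Real.log M := Real.log_pos (by linarith)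
  calc ∑ n ∈ Finset.Ioc N M, (((n:ℝ)) * Real.log n ^ 2)⁻¹
      ≤ ∫ t in (N:ℝ)..M, (t * Real.log t ^ 2)⁻¹ := h1
    _ = (Real.log N)⁻¹ - (Real.log M)⁻¹ := h2
    _ ≤ 1 := by
        have h3 : (Real.log N)⁻¹ ≤ 1 := by
          rw [inv_le_one_iff₀]; right; exact hlogN
        have h4 : 0 < (Real.log M)⁻¹ := by positivity
        linarith

lemma invli_antitoneOn {N M : ℝ} (hN : 3 ≤ N) :
    AntitoneOn (fun t : ℝ => (li t)⁻¹) (Set.Icc N M) := by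
  intro a ha b hb hab
  have ha3 : 3 ≤ a := le_trans hN ha.1
  apply inv_anti₀ (li_pos ha3)
  exact li_mono (by linarith) hab

lemma sum_invli_le_integral {N M : ℕ} (hN : 3 ≤ N) (hNM : N ≤ M) :
    ∑ n ∈ Finset.Ioc N M, (li n)⁻¹ ≤ ∫ t in (N:ℝ)..M, (li t)⁻¹ := by
  have hNr : (3:ℝ) ≤ (N:ℝ) := by exact_mod_cast hN
  have h1 := AntitoneOn.sum_le_integral_Ico hNM (invli_antitoneOn hNr (M := (M:ℝ)))
  rwa [← sum_Ioc_shift (fun t => (li t)⁻¹) N M] at h1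

lemma integral_le_sum_invli {N M : ℕ} (hN : 3 ≤ N) (hNM : N ≤ M) :
    ∫ t in (N:ℝ)..M, (li t)⁻¹ ≤ (∑ n ∈ Finset.Ioc N M, (li n)⁻¹) + (li N)⁻¹ := by
  have hNr : (3:ℝ) ≤ (N:ℝ) := by exact_mod_cast hN
  have h1 := AntitoneOn.integral_le_sum_Ico hNM (invli_antitoneOn hNr (M := (M:ℝ)))
  have h2 : ∑ n ∈ Finset.Ico N M, (li n)⁻¹ ≤ (∑ n ∈ Finset.Ioc N M, (li n)⁻¹) + (li N)⁻¹ := by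
    rcases eq_or_lt_of_le hNM with h | h
    · subst h; simp; exact (li_pos hNr).le
    · have hIcc1 : Finset.Icc N M = insert N (Finset.Ioc N M) := by
        rw [Finset.Icc_eq_cons_Ioc hNM, Finset.cons_eq_insert]
      have hIcc2 : Finset.Icc N M = insert M (Finset.Ico N M) := by
        rw [Finset.Icc_eq_cons_Ico hNM, Finset.cons_eq_insert]
      have e1 : ∑ n ∈ Finset.Icc N M, ((li n)⁻¹ : ℝ)
          = (li N)⁻¹ + ∑ n ∈ Finset.Ioc N M, (li n)⁻¹ := by
        rw [hIcc1, Finset.sum_insert (by simp)]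
      have e2 : ∑ n ∈ Finset.Icc N M, ((li n)⁻¹ : ℝ)
          = (li M)⁻¹ + ∑ n ∈ Finset.Ico N M, (li n)⁻¹ := by
        rw [hIcc2, Finset.sum_insert (by simp)]
      have hM3 : (3:ℝ) ≤ (M:ℝ) := by push_cast; linarith [show (N:ℝ) ≤ M by exact_mod_cast hNM]
      have : 0 ≤ ((li (M:ℝ))⁻¹ : ℝ) := (inv_pos.mpr (li_pos hM3)).le
      linarith
  linarith

lemma inv_li_le_exp_delta {x : ℝ} (hx : 4096 ≤ x) :
    (li x)⁻¹ ≤ Real.exp (-(1/2) * pntDelta x) := by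
  have hx0 : (0:ℝ) < x := by linarith
  set s := Real.sqrt x with hs
  set t := Real.sqrt s with ht
  have hs0 : 0 ≤ s := Real.sqrt_nonneg x
  have hssq : s ^ 2 = x := Real.sq_sqrt hx0.le
  have hs64 : 64 ≤ s := by
    rw [hs, show (64:ℝ) = Real.sqrt 4096 by
      rw [show (4096:ℝ) = 64^2 by norm_num, Real.sqrt_sq]; norm_num]
    exact Real.sqrt_le_sqrt hx
  have htsq : t ^ 2 = s := Real.sq_sqrt hs0
  have ht8 : 8 ≤ t := by
    rw [ht, show (8:ℝ) = Real.sqrt 64 by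
      rw [show (64:ℝ) = 8^2 by norm_num, Real.sqrt_sq]; norm_num]
    exact Real.sqrt_le_sqrt hs64
  have hlogx : Real.log x = 2 * Real.log s := by
    rw [hs, Real.log_sqrt hx0.le]; ring
  have hlogs : Real.log s ≤ 2 * t := by
    have h1 : Real.log s ≤ s ^ ((1:ℝ)/2) / (1/2) := Real.log_le_rpow_div hs0 (by norm_num)
    rw [← Real.sqrt_eq_rpow, ← ht] at h1
    linarith
  have hkey : Real.log x * s ≤ x - 2 := by
    have hx4 : x = t ^ 4 := by rw [← hssq, ← htsq]; ring
    have he : Real.log x * s = 2 * Real.log s * t ^ 2 := by rw [hlogx, htsq]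
    rw [he, hx4]
    have hb1 : 2 * Real.log s * t^2 ≤ 4 * t^3 := by
      nlinarith [mul_nonneg (by linarith : (0:ℝ) ≤ 2*t - Real.log s) (sq_nonneg t)]
    have ht3 : 512 ≤ t^3 := by nlinarith
    have hb2 : 4*t^3 ≤ t^4 - 2 := by nlinarith
    linarith
  have hlogxpos : 0 < Real.log x := Real.log_pos (by linarith)
  have hlix : 0 < li x := li_pos (by linarith)
  have h1 : (li x)⁻¹ ≤ Real.log x / (x - 2) := by
    have hl := li_lower (show (3:ℝ) ≤ x by linarith)
    have h0 : 0 < (x-2)/Real.log x := div_pos (by linarith) hlogxpos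
    have h1' : (li x)⁻¹ ≤ ((x-2)/Real.log x)⁻¹ := inv_anti₀ h0 hl
    rwa [inv_div] at h1'
  have hs0' : 0 < s := by linarith
  have h2 : Real.log x / (x - 2) ≤ s⁻¹ := by
    rw [div_le_iff₀ (by linarith : (0:ℝ) < x - 2), inv_mul_eq_div,
      le_div_iff₀ hs0']
    exact hkey
  have hsx : s⁻¹ = Real.exp (-(1/2 * Real.log x)) := by
    rw [Real.exp_neg]
    congr 1
    rw [hlogx, show (1:ℝ)/2 * (2 * Real.log s) = Real.log s by ring,
      Real.exp_log hs0']
  have h3 : Real.exp (-(1/2 * Real.log x)) ≤ Real.exp (-(1/2) * pntDelta x) := by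
    apply Real.exp_le_exp.mpr
    have := delta_le_log (show (21:ℝ) ≤ x by linarith)
    linarith
  calc (li x)⁻¹ ≤ Real.log x / (x-2) := h1
    _ ≤ s⁻¹ := h2
    _ = Real.exp (-(1/2 * Real.log x)) := hsx
    _ ≤ Real.exp (-(1/2) * pntDelta x) := h3

lemma e_bound {K C : ℝ} (hK : 0 < K) (hC : 0 < C) {n : ℕ} (hn : 4096 ≤ (n:ℝ))
    (h1 : |(Nat.primeCounting n : ℝ) - li n| ≤ K * ((n:ℝ) * Real.exp (-C * pntDelta n)))
    (h2 : Real.log n * Real.exp (-C * pntDelta n) ≤ 1/(4*K))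
    (h3 : (Real.log n)^4 * Real.exp (-(C/2) * pntDelta n) ≤ 1) :
    |1/(Nat.primeCounting n : ℝ) - (li n)⁻¹|
      ≤ 8*K * Real.exp (-(C/2) * pntDelta n) * (((n:ℝ)) * Real.log n ^ 2)⁻¹ := by
  set E := Real.exp (-C * pntDelta n) with hE
  set E2 := Real.exp (-(C/2) * pntDelta n) with hE2
  have hEpos : 0 < E := Real.exp_pos _
  have hE2pos : 0 < E2 := Real.exp_pos _
  have hEE : E = E2 * E2 := by
    rw [hE, hE2, ← Real.exp_add]; congr 1; ring
  have hlogn : 2 ≤ Real.log n := by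
    have he2 : Real.exp 2 ≤ 4096 := by
      rw [show (2:ℝ) = 1+1 by norm_num, Real.exp_add]
      nlinarith [Real.exp_one_lt_d9, Real.exp_pos 1]
    have := Real.log_le_log (Real.exp_pos 2) (le_trans he2 hn)
    rwa [Real.log_exp] at this
  have hlin : (n:ℝ) / (2 * Real.log n) ≤ li n := by
    have hl := li_lower (show (3:ℝ) ≤ (n:ℝ) by linarith)
    have : (n:ℝ) / (2 * Real.log n) ≤ ((n:ℝ) - 2) / Real.log n := by
      rw [div_le_div_iff₀ (by positivity) (by linarith)]
      nlinarith
    linarith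
  have hlipos : 0 < li (n:ℝ) := li_pos (by linarith)
  have hKn : K * ((n:ℝ) * E) ≤ li n / 2 := by
    have ha : K * (Real.log n * E) ≤ 1/4 := by
      rw [← mul_le_mul_iff_right₀ hK] at h2
      calc K * (Real.log n * E) = K * (Real.log n * E) := rfl
        _ ≤ K * (1/(4*K)) := by nlinarith
        _ = 1/4 := by field_simp
    have hb : K * ((n:ℝ) * E) = (K * (Real.log n * E)) * ((n:ℝ)/Real.log n) := by
      field_simp
    rw [hb]
    calc (K * (Real.log n * E)) * ((n:ℝ)/Real.log n) ≤ (1/4) * ((n:ℝ)/Real.log n) := by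
          apply mul_le_mul_of_nonneg_right ha (by positivity)
      _ = ((n:ℝ) / (2 * Real.log n))/2 := by ring
      _ ≤ li n / 2 := by linarith
  have hpi : li n / 2 ≤ (Nat.primeCounting n : ℝ) := by
    have := abs_le.mp h1
    linarith [this.1]
  have hpipos : 0 < (Nat.primeCounting n : ℝ) := by linarith
  have heq : 1/(Nat.primeCounting n : ℝ) - (li (n:ℝ))⁻¹
      = (li n - (Nat.primeCounting n : ℝ)) / ((Nat.primeCounting n : ℝ) * li n) := by
    rw [one_div]
    exact inv_sub_inv (ne_of_gt hpipos) (ne_of_gt hlipos)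
  rw [heq, abs_div, abs_of_pos (by positivity : (0:ℝ) < (Nat.primeCounting n : ℝ) * li n)]
  rw [div_le_iff₀ (by positivity)]
  have habs : |li (n:ℝ) - (Nat.primeCounting n : ℝ)| ≤ K * ((n:ℝ) * E) := by
    rw [abs_sub_comm]; exact h1
  -- the target: |li n - π n| ≤ 8K E2 (n log²n)⁻¹ * (π n * li n)
  -- enough : K n E ≤ 8K E2 (n log²n)⁻¹ * (li n/2 * li n)  with li n ≥ n/(2 log n)
  have hmain : K * ((n:ℝ) * E) ≤ 8*K * E2 * (((n:ℝ)) * Real.log n ^ 2)⁻¹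
      * ((li n / 2) * li n) := by
    have hli2 : ((n:ℝ) / (2 * Real.log n)) * ((n:ℝ) / (2 * Real.log n)) / 2
        ≤ (li n / 2) * li n := by
      have ha0 : 0 ≤ (n:ℝ)/(2*Real.log n) := by positivity
      nlinarith [mul_le_mul hlin hlin ha0 hlipos.le]
    have hE2' : Real.log n ^ 2 * E ≤ E2 / Real.log n ^ 2 := by
      rw [hEE, div_eq_mul_inv]
      calc Real.log n ^ 2 * (E2 * E2)
          = (Real.log n ^ 4 * E2) * (E2 / Real.log n ^ 2) := by
            field_simp
        _ ≤ 1 * (E2 / Real.log n ^ 2) := by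
            apply mul_le_mul_of_nonneg_right _ (by positivity)
            exact h3
        _ = E2 * (Real.log n ^ 2)⁻¹ := by rw [one_mul, div_eq_mul_inv]
    calc K * ((n:ℝ) * E)
        = K * ((n:ℝ)/Real.log n ^2) * (Real.log n^2 * E) := by field_simp
      _ ≤ K * ((n:ℝ)/Real.log n ^2) * (E2 / Real.log n ^ 2) := by
          apply mul_le_mul_of_nonneg_left hE2' (by positivity)
      _ = 8*K * E2 * (((n:ℝ)) * Real.log n ^ 2)⁻¹
          * (((n:ℝ) / (2 * Real.log n)) * ((n:ℝ) / (2 * Real.log n)) / 2) := by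
          field_simp
          ring
      _ ≤ 8*K * E2 * (((n:ℝ)) * Real.log n ^ 2)⁻¹ * ((li n / 2) * li n) := by
          apply mul_le_mul_of_nonneg_left hli2 (by positivity)
  calc |li (n:ℝ) - (Nat.primeCounting n : ℝ)| ≤ K * ((n:ℝ) * E) := habs
    _ ≤ 8*K * E2 * (((n:ℝ)) * Real.log n ^ 2)⁻¹ * ((li n / 2) * li n) := hmain
    _ ≤ 8*K * E2 * (((n:ℝ)) * Real.log n ^ 2)⁻¹ * ((Nat.primeCounting n:ℝ) * li n) := by
        apply mul_le_mul_of_nonneg_left _ (by positivity)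
        apply mul_le_mul_of_nonneg_right hpi hlipos.le

lemma tendsto_delta_atTop : Tendsto pntDelta atTop atTop := by
  apply tendsto_atTop_mono' atTop (f₁ := fun x => Real.sqrt (Real.log x))
  · filter_upwards [Real.tendsto_log_atTop.eventually_ge_atTop (256:ℝ)] with x hx
    exact delta_ge_sqrt hx
  · exact _root_.tendsto_sqrt_atTop.comp Real.tendsto_log_atTop

lemma sqrt_le_sub_one {x : ℝ} (hx : 4 ≤ x) : Real.sqrt x ≤ x - 1 := by
  set t := Real.sqrt x with ht
  have ht0 : 0 ≤ t := Real.sqrt_nonneg x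
  have htsq : t^2 = x := Real.sq_sqrt (by linarith)
  have ht2 : 2 ≤ t := by
    rw [ht, show (2:ℝ) = Real.sqrt 4 by
      rw [show (4:ℝ) = 2^2 by norm_num, Real.sqrt_sq]; norm_num]
    exact Real.sqrt_le_sqrt hx
  nlinarith


set_option maxHeartbeats 2000000 in
theorem sum_formula_sharp (C : ℝ) (hC : 0 < C)
    (hR : (fun x : ℝ => primePi x - li x)
      =O[atTop] (fun x : ℝ => x * Real.exp (-C * pntDelta x))) :
    ∃ B D : ℝ, 0 < D ∧
      (fun x : ℝ => (∑ n ∈ Finset.Icc 2 ⌊x⌋₊, 1 / (Nat.primeCounting n : ℝ)) -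
          (Real.log x * Real.log (li x) -
            (∫ t in (3:ℝ)..x, Real.log (li t) / t) + B))
        =O[atTop] (fun x : ℝ => Real.exp (-D * pntDelta x)) := by
  obtain ⟨K, hK0, hKB⟩ := hR.exists_pos
  rw [Asymptotics.isBigOWith_iff] at hKB
  set D1 : ℝ := min (C/2) (1/2) with hD1def
  have hD1 : 0 < D1 := lt_min (by linarith) (by norm_num)
  have hT1 : Tendsto (fun x : ℝ => Real.log x * Real.exp (-C * pntDelta x)) atTop (nhds 0) := by
    have := tendsto_logpow_mul_exp_delta 1 hC
    simpa using this
  have hT2 : Tendsto (fun x : ℝ => (Real.log x)^4 * Real.exp (-(C/2) * pntDelta x))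
      atTop (nhds 0) := tendsto_logpow_mul_exp_delta 4 (by linarith)
  have hEv : ∀ᶠ t : ℝ in atTop,
      |primePi t - li t| ≤ K * (t * Real.exp (-C * pntDelta t)) ∧
      Real.log t * Real.exp (-C * pntDelta t) ≤ 1/(4*K) ∧
      (Real.log t)^4 * Real.exp (-(C/2) * pntDelta t) ≤ 1 := by
    filter_upwards [hKB, hT1.eventually_le_const (by positivity : (0:ℝ) < 1/(4*K)),
      hT2.eventually_le_const (by norm_num : (0:ℝ) < 1), eventually_ge_atTop (0:ℝ)]
      with t h1 h2 h3 h4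
    refine ⟨?_, h2, h3⟩
    rw [Real.norm_eq_abs, Real.norm_eq_abs] at h1
    calc |primePi t - li t| ≤ K * |t * Real.exp (-C * pntDelta t)| := h1
      _ = K * (t * Real.exp (-C * pntDelta t)) := by
          rw [abs_of_nonneg (by positivity)]
  obtain ⟨x₁, hx₁⟩ := eventually_atTop.mp hEv
  set n₀ : ℕ := max ⌈x₁⌉₊ 4096 with hn₀def
  have hn₀4096 : 4096 ≤ n₀ := le_max_right _ _
  have hn₀x₁ : x₁ ≤ (n₀ : ℝ) := by
    calc x₁ ≤ ⌈x₁⌉₊ := Nat.le_ceil x₁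
      _ ≤ (n₀:ℝ) := by exact_mod_cast le_max_left _ _
  have hn₀r : (4096:ℝ) ≤ (n₀:ℝ) := by exact_mod_cast hn₀4096
  -- integer facts
  have hfact : ∀ n : ℕ, n₀ ≤ n →
      |(Nat.primeCounting n : ℝ) - li n| ≤ K * ((n:ℝ) * Real.exp (-C * pntDelta n)) ∧
      Real.log n * Real.exp (-C * pntDelta n) ≤ 1/(4*K) ∧
      (Real.log n)^4 * Real.exp (-(C/2) * pntDelta n) ≤ 1 ∧ (4096:ℝ) ≤ (n:ℝ) := by
    intro n hn
    have hnr : (n₀:ℝ) ≤ (n:ℝ) := by exact_mod_cast hn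
    have h := hx₁ (n:ℝ) (le_trans hn₀x₁ hnr)
    have hpp : primePi (n:ℝ) = (Nat.primeCounting n : ℝ) := by
      unfold primePi
      rw [Nat.floor_natCast]
    rw [hpp] at h
    exact ⟨h.1, h.2.1, h.2.2, le_trans hn₀r hnr⟩
  have hen : ∀ n : ℕ, n₀ ≤ n →
      |1/(Nat.primeCounting n : ℝ) - (li n)⁻¹|
        ≤ 8*K * Real.exp (-(C/2) * pntDelta n) * (((n:ℝ)) * Real.log n ^ 2)⁻¹ := by
    intro n hn
    obtain ⟨h1, h2, h3, h4⟩ := hfact n hn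
    exact e_bound hK0 hC h4 h1 h2 h3
  set S₀ : ℝ := ∑ n ∈ Finset.Icc 2 n₀, 1/(Nat.primeCounting n : ℝ) with hS₀def
  set F : ℕ → ℝ := fun N => S₀ + (∑ n ∈ Finset.Ioc n₀ N, 1/(Nat.primeCounting n : ℝ)) - Mf N
    with hFdef
  -- difference bound
  have hdiff : ∀ N M : ℕ, n₀ ≤ N → N ≤ M →
      |F M - F N| ≤ (8*K+1) * Real.exp (-D1 * pntDelta N) := by
    intro N M hN hNM
    have hNr : (4096:ℝ) ≤ (N:ℝ) := le_trans hn₀r (by exact_mod_cast hN)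
    have hNMr : (N:ℝ) ≤ (M:ℝ) := by exact_mod_cast hNM
    have hsplit : F M - F N = (∑ n ∈ Finset.Ioc N M, 1/(Nat.primeCounting n : ℝ))
        - ∫ t in (N:ℝ)..(M:ℝ), (li t)⁻¹ := by
      rw [hFdef]
      have h1 : ∑ n ∈ Finset.Ioc n₀ N, 1/(Nat.primeCounting n : ℝ)
          + ∑ n ∈ Finset.Ioc N M, 1/(Nat.primeCounting n : ℝ)
          = ∑ n ∈ Finset.Ioc n₀ M, 1/(Nat.primeCounting n : ℝ) :=
        Finset.sum_Ioc_consecutive _ hN hNM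
      have h2 : Mf (M:ℝ) - Mf (N:ℝ) = ∫ t in (N:ℝ)..(M:ℝ), (li t)⁻¹ :=
        Mf_sub (by linarith) hNMr
      simp only
      linarith
    have hterm : ∀ n ∈ Finset.Ioc N M,
        |1/(Nat.primeCounting n : ℝ) - (li n)⁻¹|
          ≤ 8*K * Real.exp (-(C/2) * pntDelta N) * (((n:ℝ)) * Real.log n ^ 2)⁻¹ := by
      intro n hn
      rw [Finset.mem_Ioc] at hn
      have hnN : (N:ℝ) ≤ (n:ℝ) := by exact_mod_cast hn.1.le
      calc |1/(Nat.primeCounting n : ℝ) - (li n)⁻¹|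
          ≤ 8*K * Real.exp (-(C/2) * pntDelta n) * (((n:ℝ)) * Real.log n ^ 2)⁻¹ :=
            hen n (le_trans hN hn.1.le)
        _ ≤ 8*K * Real.exp (-(C/2) * pntDelta N) * (((n:ℝ)) * Real.log n ^ 2)⁻¹ := by
            apply mul_le_mul_of_nonneg_right _ ?_
            · apply mul_le_mul_of_nonneg_left _ (by positivity)
              apply Real.exp_le_exp.mpr
              have := delta_mono (show (21:ℝ) ≤ (N:ℝ) by linarith) hnN
              nlinarith
            · have hn3 : (3:ℝ) ≤ (n:ℝ) := by linarith
              have : (0:ℝ) < Real.log n := Real.log_pos (by linarith)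
              positivity
    have hA : |∑ n ∈ Finset.Ioc N M, (1/(Nat.primeCounting n : ℝ) - (li n)⁻¹)|
        ≤ 8*K * Real.exp (-(C/2) * pntDelta N) := by
      calc |∑ n ∈ Finset.Ioc N M, (1/(Nat.primeCounting n : ℝ) - (li n)⁻¹)|
          ≤ ∑ n ∈ Finset.Ioc N M, |1/(Nat.primeCounting n : ℝ) - (li n)⁻¹| :=
            Finset.abs_sum_le_sum_abs _ _
        _ ≤ ∑ n ∈ Finset.Ioc N M,
            8*K * Real.exp (-(C/2) * pntDelta N) * (((n:ℝ)) * Real.log n ^ 2)⁻¹ :=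
            Finset.sum_le_sum hterm
        _ = 8*K * Real.exp (-(C/2) * pntDelta N)
            * ∑ n ∈ Finset.Ioc N M, (((n:ℝ)) * Real.log n ^ 2)⁻¹ := by
            rw [Finset.mul_sum]
        _ ≤ 8*K * Real.exp (-(C/2) * pntDelta N) * 1 := by
            apply mul_le_mul_of_nonneg_left _ (by positivity)
            exact sum_invlogsq_le (by omega) hNM
        _ = 8*K * Real.exp (-(C/2) * pntDelta N) := by ring
    have hBd : |∑ n ∈ Finset.Ioc N M, (li n : ℝ)⁻¹ - ∫ t in (N:ℝ)..(M:ℝ), (li t)⁻¹|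
        ≤ Real.exp (-(1/2) * pntDelta N) := by
      have h1 := sum_invli_le_integral (N := N) (M := M) (by omega) hNM
      have h2 := integral_le_sum_invli (N := N) (M := M) (by omega) hNM
      have h3 : (li (N:ℝ))⁻¹ ≤ Real.exp (-(1/2) * pntDelta N) := inv_li_le_exp_delta hNr
      rw [abs_le]
      constructor
      · have : (0:ℝ) < Real.exp (-(1/2) * pntDelta N) := Real.exp_pos _
        linarith
      · linarith [Real.exp_pos (-(1/2) * pntDelta (N:ℝ)), inv_pos.mpr (li_pos (show (3:ℝ) ≤ (N:ℝ) by linarith))]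
    have hcomb : F M - F N
        = (∑ n ∈ Finset.Ioc N M, (1/(Nat.primeCounting n : ℝ) - (li n)⁻¹))
          + ((∑ n ∈ Finset.Ioc N M, (li n : ℝ)⁻¹) - ∫ t in (N:ℝ)..(M:ℝ), (li t)⁻¹) := by
      rw [hsplit, Finset.sum_sub_distrib]
      ring
    have hdpos : 0 ≤ pntDelta (N:ℝ) := (delta_pos (show (21:ℝ) ≤ (N:ℝ) by linarith)).le
    have he1 : Real.exp (-(C/2) * pntDelta N) ≤ Real.exp (-D1 * pntDelta N) := by
      apply Real.exp_le_exp.mpr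
      have : D1 ≤ C/2 := min_le_left _ _
      nlinarith
    have he2 : Real.exp (-(1/2) * pntDelta N) ≤ Real.exp (-D1 * pntDelta N) := by
      apply Real.exp_le_exp.mpr
      have : D1 ≤ 1/2 := min_le_right _ _
      nlinarith
    calc |F M - F N| ≤ |∑ n ∈ Finset.Ioc N M, (1/(Nat.primeCounting n : ℝ) - (li n)⁻¹)|
          + |(∑ n ∈ Finset.Ioc N M, (li n : ℝ)⁻¹) - ∫ t in (N:ℝ)..(M:ℝ), (li t)⁻¹| := by
          rw [hcomb]; exact abs_add_le _ _
      _ ≤ 8*K * Real.exp (-(C/2) * pntDelta N) + Real.exp (-(1/2) * pntDelta N) := by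
          apply add_le_add hA hBd
      _ ≤ (8*K+1) * Real.exp (-D1 * pntDelta N) := by nlinarith [Real.exp_pos (-D1 * pntDelta (N:ℝ))]
  -- Cauchy sequence and limit
  have hdt : Tendsto (fun k : ℕ => pntDelta ((n₀ + k : ℕ) : ℝ)) atTop atTop := by
    apply tendsto_delta_atTop.comp
    apply tendsto_natCast_atTop_atTop.comp
    apply tendsto_atTop_atTop_of_monotone (fun a b hab => by omega)
    intro b; exact ⟨b, by omega⟩
  have hbt : Tendsto (fun k : ℕ => (8*K+1) * Real.exp (-D1 * pntDelta ((n₀ + k : ℕ) : ℝ)))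
      atTop (nhds 0) := by
    have h1 : Tendsto (fun k : ℕ => -D1 * pntDelta ((n₀ + k : ℕ) : ℝ)) atTop atBot := by
      have h0 := tendsto_neg_atTop_atBot.comp (hdt.const_mul_atTop hD1)
      have he : (fun k : ℕ => -D1 * pntDelta ((n₀ + k : ℕ) : ℝ))
          = (fun x : ℝ => -x) ∘ (fun k : ℕ => D1 * pntDelta ((n₀ + k : ℕ) : ℝ)) := by
        funext k; simp [neg_mul]
      rw [he]
      exact h0
    have h2 := Real.tendsto_exp_atBot.comp h1
    have h3 := h2.const_mul (8*K+1)
    simpa using h3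
  have hcauchy : CauchySeq (fun k : ℕ => F (n₀ + k)) := by
    apply cauchySeq_of_le_tendsto_0'
      (fun k => (8*K+1) * Real.exp (-D1 * pntDelta ((n₀ + k : ℕ) : ℝ))) ?_ hbt
    intro n m hnm
    rw [Real.dist_eq, abs_sub_comm]
    exact hdiff (n₀+n) (n₀+m) (Nat.le_add_right _ _) (by omega)
  obtain ⟨B, hB⟩ := cauchySeq_tendsto_of_complete hcauchy
  have hFt : Tendsto F atTop (nhds B) := by
    rw [← tendsto_add_atTop_iff_nat n₀]
    have : (fun k : ℕ => F (k + n₀)) = (fun k : ℕ => F (n₀ + k)) := by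
      funext k; rw [Nat.add_comm]
    rw [this]
    exact hB
  have hFB : ∀ N : ℕ, n₀ ≤ N → |F N - B| ≤ (8*K+1) * Real.exp (-D1 * pntDelta N) := by
    intro N hN
    have h1 : Tendsto (fun M : ℕ => |F M - F N|) atTop (nhds |B - F N|) :=
      ((hFt.sub tendsto_const_nhds).abs)
    rw [abs_sub_comm]
    apply le_of_tendsto h1
    filter_upwards [eventually_ge_atTop N] with M hM
    exact hdiff N M hN hM
  refine ⟨B, D1/2, by positivity, ?_⟩
  rw [Asymptotics.isBigO_iff]
  refine ⟨8*K+2, ?_⟩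
  filter_upwards [eventually_ge_atTop ((n₀:ℝ)+1)] with x hx
  have hx4096 : (4097:ℝ) ≤ x := by linarith [hn₀r]
  have hxpos : (0:ℝ) < x := by linarith
  set N := ⌊x⌋₊ with hNdef
  have hNx : (N:ℝ) ≤ x := Nat.floor_le hxpos.le
  have hxN : x < (N:ℝ)+1 := Nat.lt_floor_add_one x
  have hNn₀ : n₀ ≤ N := by
    have h1 : ((n₀+1:ℕ):ℝ) ≤ x := by push_cast; linarith
    have h2 := Nat.le_floor h1
    omega
  have hNr4096 : (4096:ℝ) ≤ (N:ℝ) := le_trans hn₀r (by exact_mod_cast hNn₀)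
  have hsum : ∑ n ∈ Finset.Icc 2 N, 1/(Nat.primeCounting n : ℝ)
      = S₀ + ∑ n ∈ Finset.Ioc n₀ N, 1/(Nat.primeCounting n : ℝ) := by
    have h1 : Finset.Icc 2 N = Finset.Ioc 1 N := Finset.Icc_add_one_left_eq_Ioc 1 N
    have h2 : Finset.Icc 2 n₀ = Finset.Ioc 1 n₀ := Finset.Icc_add_one_left_eq_Ioc 1 n₀
    rw [hS₀def, h1, h2, Finset.sum_Ioc_consecutive _ (by omega : 1 ≤ n₀) hNn₀]
  have hMfx : Mf x - Mf N = ∫ t in (N:ℝ)..x, (li t)⁻¹ := Mf_sub (by linarith) hNx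
  have hint0 : 0 ≤ ∫ t in (N:ℝ)..x, (li t)⁻¹ := by
    apply intervalIntegral.integral_nonneg hNx
    intro u hu
    exact (inv_pos.mpr (li_pos (by linarith [hu.1] : (3:ℝ) ≤ u))).le
  have hintle : (∫ t in (N:ℝ)..x, (li t)⁻¹) ≤ (li (N:ℝ))⁻¹ := by
    have hc : (∫ t in (N:ℝ)..x, (li t)⁻¹) ≤ ∫ t in (N:ℝ)..x, (li (N:ℝ))⁻¹ := by
      apply intervalIntegral.integral_mono_on hNx
        (inv_li_integrable (by linarith) (by linarith)) intervalIntegrable_const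
      intro t ht
      exact inv_anti₀ (li_pos (by linarith : (3:ℝ) ≤ (N:ℝ)))
        (li_mono (by linarith) ht.1)
    rw [intervalIntegral.integral_const, smul_eq_mul] at hc
    have hpos : 0 ≤ (li (N:ℝ))⁻¹ := (inv_pos.mpr (li_pos (by linarith : (3:ℝ) ≤ (N:ℝ)))).le
    nlinarith
  have hdx : pntDelta x / 2 ≤ pntDelta N := by
    have h1 := delta_sqrt_half (show (441:ℝ) ≤ x by linarith)
    have h21 : (21:ℝ) ≤ Real.sqrt x := by
      rw [show (21:ℝ) = Real.sqrt 441 by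
        rw [show (441:ℝ) = 21^2 by norm_num, Real.sqrt_sq]; norm_num]
      exact Real.sqrt_le_sqrt (by linarith)
    have hsq : Real.sqrt x ≤ (N:ℝ) := by
      have := sqrt_le_sub_one (show (4:ℝ) ≤ x by linarith)
      linarith
    have h2 := delta_mono h21 hsq
    linarith
  have hmain : (∑ n ∈ Finset.Icc 2 N, 1/(Nat.primeCounting n:ℝ))
      - (Real.log x * Real.log (li x) - (∫ t in (3:ℝ)..x, Real.log (li t) / t) + B)
      = (F N - B) - (Mf x - Mf N) := by
    rw [hsum, hFdef]
    show S₀ + _ - (Mf x + B) = _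
    simp only
    ring
  rw [Real.norm_eq_abs, Real.norm_eq_abs, hmain]
  have hFBN := hFB N hNn₀
  have hliN : (li (N:ℝ))⁻¹ ≤ Real.exp (-(1/2) * pntDelta N) := inv_li_le_exp_delta hNr4096
  have hdposN : 0 ≤ pntDelta (N:ℝ) := (delta_pos (by linarith : (21:ℝ) ≤ (N:ℝ))).le
  have hee : Real.exp (-(1/2) * pntDelta N) ≤ Real.exp (-D1 * pntDelta N) := by
    apply Real.exp_le_exp.mpr
    have : D1 ≤ 1/2 := min_le_right _ _
    nlinarith
  have hfinexp : Real.exp (-D1 * pntDelta N) ≤ Real.exp (-(D1/2) * pntDelta x) := by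
    apply Real.exp_le_exp.mpr
    nlinarith
  calc |F N - B - (Mf x - Mf ↑N)|
      ≤ |F N - B| + (∫ t in (N:ℝ)..x, (li t)⁻¹) := by
        rw [hMfx]
        calc |F N - B - ∫ t in (N:ℝ)..x, (li t)⁻¹|
            ≤ |F N - B| + |∫ t in (N:ℝ)..x, (li t)⁻¹| := abs_sub _ _
          _ = |F N - B| + (∫ t in (N:ℝ)..x, (li t)⁻¹) := by rw [abs_of_nonneg hint0]
    _ ≤ (8*K+1) * Real.exp (-D1 * pntDelta N) + Real.exp (-D1 * pntDelta N) := by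
        have := le_trans (le_trans hintle hliN) hee
        linarith
    _ = (8*K+2) * Real.exp (-D1 * pntDelta N) := by ring
    _ ≤ (8*K+2) * Real.exp (-(D1/2) * pntDelta x) := by
        apply mul_le_mul_of_nonneg_left hfinexp (by linarith)
    _ ≤ (8*K+2) * |Real.exp (-(D1/2) * pntDelta x)| := by
        rw [abs_of_pos (Real.exp_pos _)]
end
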